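/- Let G=(V,E) be a finite connected subgraph of 𝕃. There exists a splitting set Q of plaquettes such that: (i) V ⊆ ins([Q]); (ii) every plaquette in Q is dual to some edge of 𝔼 having exactly one endvertex in V; (iii) if W is a connected set of vertices of ℤ³ with V∩W=∅ such that there exists an infinite path of 𝕃 starting in W which uses no vertex of V, then W ⊆ out([Q]). -/

import Mathlib

open MeasureTheory Filter Topology ProbabilityTheory

noncomputable section

attribute [local instance] Classical.propDecidable

/-! ### The lattice ℤ³ -/

abbrev V3 := Fin 3 → ℤ
abbrev R3 := Fin 3 → ℝ

def toR (x : V3) : R3 := fun i => (x i : ℝ)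

/-- `L¹` distance on `ℤ³`. -/
def dist1 (x y : V3) : ℤ := ∑ i, |x i - y i|

lemma dist1_comm (x y : V3) : dist1 x y = dist1 y x := by
  simp only [dist1]
  exact Finset.sum_congr rfl fun i _ => abs_sub_comm _ _

abbrev EdgeP := Sym2 V3

def IsLatticeEdge (e : EdgeP) : Prop := ∃ x y : V3, e = s(x, y) ∧ dist1 x y = 1

/-- Configurations: `ω e = true` means that the edge `e` is open. -/
abbrev Config := EdgeP → Bool

/-- `V(E)`: the set of vertices belonging to at least one edge of `E`. -/
def vertexSet (E : Set EdgeP) : Set V3 := {x | ∃ e ∈ E, x ∈ e}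

/-- The graph on `ℤ³` whose edges are the open lattice edges of `ω`. -/
def cfgGraph (ω : Config) : SimpleGraph V3 where
  Adj x y := dist1 x y = 1 ∧ ω s(x, y) = true
  symm := ⟨fun x y h => ⟨by rw [dist1_comm]; exact h.1, by rw [Sym2.eq_swap]; exact h.2⟩⟩
  loopless := ⟨fun x h => by simp [dist1] at h⟩

/-- The number of open components meeting `V(E)`. -/
def kGcount (E : Set EdgeP) (ω : Config) : ℕ :=
  Set.ncard {c : (cfgGraph ω).ConnectedComponent |
    ∃ x ∈ vertexSet E, (cfgGraph ω).connectedComponentMk x = c}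

/-! ### Random-cluster measures -/

def rcWeight (E : Finset EdgeP) (p q : ℝ) (ω : Config) : ℝ :=
  (∏ e ∈ E, if ω e = true then p else 1 - p) * q ^ kGcount (E : Set EdgeP) ω

def extCfg (E : Finset EdgeP) (ζ : Config) (σ : {e // e ∈ E} → Bool) : Config :=
  fun e => if h : e ∈ E then σ ⟨e, h⟩ else ζ e

/-- The partition function `Z^ζ_{G,p,q}`. -/
def Zrc (E : Finset EdgeP) (ζ : Config) (p q : ℝ) : ℝ :=
  ∑ σ : {e // e ∈ E} → Bool, rcWeight E p q (extCfg E ζ σ)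

/-- The random-cluster measure `φ^ζ_{G,p,q}` on configurations. -/
def rcMeasure (E : Finset EdgeP) (ζ : Config) (p q : ℝ) : Measure Config :=
  (ENNReal.ofReal (Zrc E ζ p q))⁻¹ •
    Measure.sum fun σ : {e // e ∈ E} → Bool =>
      ENNReal.ofReal (rcWeight E p q (extCfg E ζ σ)) • Measure.dirac (extCfg E ζ σ)

/-- The all-open (wired) boundary condition. -/
def oneBC : Config := fun _ => true

/-- The function `g^ζ_{G,p,q}(e)`. -/
def gRC (E : Finset EdgeP) (ζ : Config) (p q : ℝ) (e : EdgeP) : ℝ :=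
  ∫ r in p..1, (r - (rcMeasure E ζ r q {ω | ω e = true}).toReal) / (r * (1 - r))

def IsEquatorEdge (e : EdgeP) : Prop :=
  ∃ x y : V3, e = s(x, y) ∧ x 2 = 0 ∧ y 2 = 1 ∧ x 0 = y 0 ∧ x 1 = y 1

/-- The Dobrushin boundary condition `μ`. -/
def dobMu : Config := fun e => if IsEquatorEdge e then false else true

def AgreesOff (E : Set EdgeP) (ζ ω : Config) : Prop := ∀ e ∉ E, ω e = ζ e


/-! ### Boxes and events -/

/-- The box `Λ_{L,M} = ([-L,L]²×[-M,M]) ∩ ℤ³`. -/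
def vbox (L M : ℕ) : Set V3 := {x | |x 0| ≤ (L : ℤ) ∧ |x 1| ≤ (L : ℤ) ∧ |x 2| ≤ (M : ℤ)}

/-- The infinite cylinder `Λ_L = [-L,L]² × ℤ`. -/
def cylV (L : ℕ) : Set V3 := {x | |x 0| ≤ (L : ℤ) ∧ |x 1| ≤ (L : ℤ)}

/-- `E_{L,M}`: edges with at least one endvertex in `Λ_{L,M}`. -/
def edgeBox (L M : ℕ) : Set EdgeP :=
  {e | IsLatticeEdge e ∧ ∃ x, x ∈ e ∧ x ∈ vbox L M}

/-- `E_L`: edges with at least one endvertex in the cylinder `Λ_L`. -/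
def edgeCyl (L : ℕ) : Set EdgeP :=
  {e | IsLatticeEdge e ∧ ∃ x, x ∈ e ∧ x ∈ cylV L}

lemma abs_coord_le_of_dist1 (x y : V3) (h : dist1 x y = 1) (i : Fin 3) :
    |x i - y i| ≤ 1 := by
  have h1 : |x i - y i| ≤ ∑ j, |x j - y j| :=
    Finset.single_le_sum (f := fun j => |x j - y j|) (fun j _ => abs_nonneg _)
      (Finset.mem_univ i)
  simp only [dist1] at h
  linarith

lemma vbox_finite (L M : ℕ) : (vbox L M).Finite := by
  have h : (Set.univ.pi fun _ : Fin 3 => Set.Icc (-(L + M : ℤ)) (L + M)).Finite :=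
    Set.Finite.pi fun _ => Set.finite_Icc _ _
  refine h.subset ?_
  rintro x ⟨h0, h1, h2⟩ i _
  have hi : |x i| ≤ (L + M : ℤ) := by
    fin_cases i
    · refine le_trans h0 ?_; omega
    · refine le_trans h1 ?_; omega
    · refine le_trans h2 ?_; omega
  exact Set.mem_Icc.mpr (abs_le.mp hi)

lemma mem_vbox_succ {L M : ℕ} {x y : V3} (hx : x ∈ vbox L M) (h : dist1 x y = 1) :
    y ∈ vbox (L + 1) (M + 1) := by
  obtain ⟨h0, h1, h2⟩ := hx
  have k0 := abs_coord_le_of_dist1 x y h 0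
  have k1 := abs_coord_le_of_dist1 x y h 1
  have k2 := abs_coord_le_of_dist1 x y h 2
  have e0 : |y 0| - |x 0| ≤ |y 0 - x 0| := abs_sub_abs_le_abs_sub _ _
  have e1 : |y 1| - |x 1| ≤ |y 1 - x 1| := abs_sub_abs_le_abs_sub _ _
  have e2 : |y 2| - |x 2| ≤ |y 2 - x 2| := abs_sub_abs_le_abs_sub _ _
  rw [abs_sub_comm] at e0 e1 e2
  refine ⟨?_, ?_, ?_⟩ <;> push_cast <;> linarith

lemma vbox_subset_succ (L M : ℕ) : vbox L M ⊆ vbox (L + 1) (M + 1) := by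
  rintro x ⟨h0, h1, h2⟩
  refine ⟨?_, ?_, ?_⟩ <;> push_cast <;> linarith

lemma edgeBox_finite (L M : ℕ) : (edgeBox L M).Finite := by
  have h1 : (vbox (L + 1) (M + 1)).Finite := vbox_finite _ _
  have h2 : ((fun p : V3 × V3 => s(p.1, p.2)) ''
      ((vbox (L + 1) (M + 1)) ×ˢ (vbox (L + 1) (M + 1)))).Finite := (h1.prod h1).image _
  refine h2.subset ?_
  rintro e ⟨⟨x, y, rfl, hd⟩, z, hz, hzbox⟩
  rcases Sym2.mem_iff.mp hz with rfl | rfl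
  · exact ⟨(z, y), ⟨vbox_subset_succ _ _ hzbox, mem_vbox_succ hzbox hd⟩, rfl⟩
  · exact ⟨(x, z), ⟨mem_vbox_succ hzbox (by rw [dist1_comm]; exact hd),
      vbox_subset_succ _ _ hzbox⟩, rfl⟩

/-- `E_{L,M}` as a finite set of edges. -/
def edgeBoxF (L M : ℕ) : Finset EdgeP := (edgeBox_finite L M).toFinset

/-- The upper boundary `∂⁺Λ`. -/
def upBdry (Λ : Set V3) : Set V3 := {x | x ∉ Λ ∧ 0 < x 2 ∧ ∃ z ∈ Λ, dist1 x z = 1}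

/-- The lower boundary `∂⁻Λ`. -/
def lowBdry (Λ : Set V3) : Set V3 := {x | x ∉ Λ ∧ x 2 ≤ 0 ∧ ∃ z ∈ Λ, dist1 x z = 1}

/-- The event `I_{L,M}`. -/
def eventI (L M : ℕ) : Set Config :=
  {ω | ¬ ∃ a ∈ upBdry (vbox L M), ∃ b ∈ lowBdry (vbox L M), (cfgGraph ω).Reachable a b}

/-- The event `I_L`. -/
def eventIL (L : ℕ) : Set Config :=
  {ω | ¬ ∃ a ∈ upBdry (cylV L), ∃ b ∈ lowBdry (cylV L), (cfgGraph ω).Reachable a b}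

/-- `Ω^μ_{L,M}`. -/
def OmegaMu (L M : ℕ) : Set Config := {ω | AgreesOff (edgeBox L M) dobMu ω}

/-- `Ω^μ_L`. -/
def OmegaMuL (L : ℕ) : Set Config := {ω | AgreesOff (edgeCyl L) dobMu ω}

/-! ### Translations and similarity of edge sets -/

def trE (t : V3) (e : EdgeP) : EdgeP := Sym2.map (· + t) e

/-- `A ≃ B`: `B` is a translate of `A`. -/
def SimE (A B : Set EdgeP) : Prop := ∃ t : V3, B = trE t '' A

/-- `e ≃ f`: the edges are parallel (translates of one another). -/
def ParaE (e f : EdgeP) : Prop := ∃ t : V3, trE t e = f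

/-- The vertex set `Q_n(e)`. -/
def QnV (n : ℕ) (e : EdgeP) : Set V3 :=
  {z | ∃ x, x ∈ e ∧ ∃ v : V3, (∀ i, |v i| ≤ (n : ℤ)) ∧ z = x + v}

/-- The set of edges of `E` having both endvertices in `S`. -/
def restrictE (E : Set EdgeP) (S : Set V3) : Set EdgeP := {f | f ∈ E ∧ ∀ x ∈ f, x ∈ S}
/-! ### Plaquettes -/

def plqOf (x y : V3) : Set R3 :=
  {z | ∀ i, (x i = y i → |z i - (x i : ℝ)| ≤ 1 / 2) ∧
            (x i ≠ y i → z i = ((x i : ℝ) + (y i : ℝ)) / 2)}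

/-- The plaquette `h(e)` dual to the edge `e`. -/
def dualPlq (e : EdgeP) : Set R3 := {z | ∃ x y : V3, e = s(x, y) ∧ z ∈ plqOf x y}

/-- Membership in `ℍ`, the set of all plaquettes. -/
def IsPlq (P : Set R3) : Prop := ∃ e, IsLatticeEdge e ∧ P = dualPlq e

/-- `0`-connectedness of two (distinct) plaquettes. -/
def ZeroConn (P Q : Set R3) : Prop := P ≠ Q ∧ (P ∩ Q).Nonempty

/-- `1`-connectedness of two (distinct) plaquettes: the intersection is
homeomorphic to the unit interval. -/
def OneConn (P Q : Set R3) : Prop :=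
  P ≠ Q ∧ Nonempty (↥(P ∩ Q) ≃ₜ ↥(Set.Icc (0 : ℝ) 1))

/-- A set `H` of plaquettes is connected under the adjacency relation `r`. -/
def SetConn (r : Set R3 → Set R3 → Prop) (H : Set (Set R3)) : Prop :=
  ∀ P ∈ H, ∀ Q ∈ H, Relation.ReflTransGen (fun a b => a ∈ H ∧ b ∈ H ∧ r a b) P Q

def ez : V3 := fun i => if i = 2 then 1 else 0

/-- The regular interface `δ₀`. -/
def regI : Set (Set R3) := {P | ∃ x : V3, x 2 = 0 ∧ P = dualPlq s(x, x + ez)}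

/-- The plaquettes that are open in `ω` (dual to closed edges). -/
def openPlqs (ω : Config) : Set (Set R3) :=
  {P | ∃ e, IsLatticeEdge e ∧ ω e = false ∧ P = dualPlq e}

/-- `δ₀ \ {h(e) : e ∈ EE}`. -/
def baseI (EE : Set EdgeP) : Set (Set R3) := regI \ {P | ∃ e ∈ EE, P = dualPlq e}

/-- The interface `Δ(ω)`: the maximal `1`-connected set of open plaquettes
containing `δ₀ \ {h(e) : e ∈ EE}`. -/
def interfaceOf (EE : Set EdgeP) (ω : Config) : Set (Set R3) :=
  {P | P ∈ openPlqs ω ∧ ∃ P₀ ∈ baseI EE,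
    Relation.ReflTransGen (fun a b => b ∈ openPlqs ω ∧ OneConn a b) P₀ P}

/-- The set of interfaces `D_{L,M}`. -/
def Dlm (L M : ℕ) : Set (Set (Set R3)) :=
  {δ | ∃ ω, ω ∈ eventI L M ∧ ω ∈ OmegaMu L M ∧ δ = interfaceOf (edgeBox L M) ω}

/-- The set of interfaces `D_L = ∪_{M ≥ 1} D_{L,M}`. -/
def DL (L : ℕ) : Set (Set (Set R3)) := ⋃ M : ℕ, Dlm L (M + 1)

/-- The extended interface `δ̄`. -/
def extI (δ : Set (Set R3)) : Set (Set R3) :=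
  δ ∪ {P | IsPlq P ∧ ∃ Q ∈ δ, OneConn P Q}

/-- A horizontal plaquette (dual to a vertical edge). -/
def IsHoriz (P : Set R3) : Prop := ∃ x : V3, P = dualPlq s(x, x + ez)

/-- The semi-extended interface `δ*`. -/
def semiI (δ : Set (Set R3)) : Set (Set R3) :=
  δ ∪ {P | IsHoriz P ∧ ∃ Q ∈ δ, OneConn P Q}

def projMap (z : R3) : R3 := fun i => if i = 2 then 1 / 2 else z i

/-- The projection `π(h)` of a plaquette onto the regular interface. -/
def projP (P : Set R3) : Set R3 := projMap '' P

/-- The c-plaquettes of (the semi-extended interface of) `δ`. -/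
def cPlqs (δ : Set (Set R3)) : Set (Set R3) :=
  {P | P ∈ semiI δ ∧ IsHoriz P ∧ ∀ Q ∈ semiI δ, projP Q = projP P → Q = P}

/-- The w-plaquettes of `δ`. -/
def wPlqs (δ : Set (Set R3)) : Set (Set R3) := semiI δ \ cPlqs δ

/-- A ceiling: a maximal `0`-connected set of c-plaquettes. -/
def IsCeiling (δ C : Set (Set R3)) : Prop :=
  C.Nonempty ∧ C ⊆ cPlqs δ ∧ SetConn ZeroConn C ∧
    ∀ C', C ⊆ C' → C' ⊆ cPlqs δ → SetConn ZeroConn C' → C' = C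

/-- A wall: a maximal `0`-connected set of w-plaquettes. -/
def IsWall (δ W : Set (Set R3)) : Prop :=
  W.Nonempty ∧ W ⊆ wPlqs δ ∧ SetConn ZeroConn W ∧
    ∀ W', W ⊆ W' → W' ⊆ wPlqs δ → SetConn ZeroConn W' → W' = W

/-- The projection of a wall: projections of its horizontal plaquettes. -/
def projW (W : Set (Set R3)) : Set (Set R3) :=
  {P | ∃ Q ∈ W, IsHoriz Q ∧ P = projP Q}

/-- `|H|`: the number of plaquettes in `H ∩ {h(e) : e ∈ EE}`. -/
def plqCard (EE : Set EdgeP) (H : Set (Set R3)) : ℕ :=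
  Set.ncard {P | P ∈ H ∧ ∃ e ∈ EE, P = dualPlq e}

/-- `E(H)`: the set of (lattice) edges dual to the plaquettes of `H`. -/
def EdgesOf (δ : Set (Set R3)) : Set EdgeP := {e | IsLatticeEdge e ∧ dualPlq e ∈ δ}

/-- The maximal configuration `ω̄_δ` compatible with `δ`. -/
def omax (δ : Set (Set R3)) : Config := fun e => if dualPlq e ∈ δ then false else true

/-- `K_δ`: the number of connected components of `(ℤ³, η(ω̄_δ))`. -/
def Kdelta (δ : Set (Set R3)) : ℕ :=
  Set.ncard (Set.univ : Set ((cfgGraph (omax δ)).ConnectedComponent))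
/-! ### Ceilings, walls, standard walls, groups of walls -/

/-- The `0`-connected component of `h` within the plaquette set `A`. -/
def zeroComp (A : Set (Set R3)) (h : Set R3) : Set (Set R3) :=
  {h' | h' ∈ A ∧ Relation.ReflTransGen (fun a b => a ∈ A ∧ b ∈ A ∧ ZeroConn a b) h h'}

/-- The ceiling `C` has height `s`: its plaquettes lie in the plane `x₃ = s + ½`. -/
def CeilHeight (C : Set (Set R3)) (s : ℤ) : Prop :=
  ∀ P ∈ C, ∀ z ∈ P, z 2 = (s : ℝ) + 1 / 2

/-- `C` is the base of the wall `W` of `δ`: the ceiling `0`-connected to `W`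
whose projection lies in the infinite `0`-connected component of `δ₀ \ π(W)`. -/
def IsBase (δ W C : Set (Set R3)) : Prop :=
  IsCeiling δ C ∧ (∃ P ∈ C, ∃ Q ∈ W, ZeroConn P Q) ∧
    ∀ P ∈ C, (zeroComp (regI \ projW W) (projP P)).Infinite

/-- The altitude of the wall `W` (the height of its base). -/
def Altitude (δ W : Set (Set R3)) (s : ℤ) : Prop := ∃ C, IsBase δ W C ∧ CeilHeight C s

/-- A pair of plaquette sets, as in a (standard) wall `S = (A, B)`. -/
abbrev WallPair := Set (Set R3) × Set (Set R3)

/-- `δ` witnesses that `(A, B)` is a standard wall: `A ⊆ δ`, `B ⊆ δ* \ δ`,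
and `A ∪ B` is the unique wall of `δ`. -/
def StdWallIface (L : ℕ) (A B δ : Set (Set R3)) : Prop :=
  δ ∈ DL L ∧ A ⊆ δ ∧ B ⊆ semiI δ \ δ ∧ IsWall δ (A ∪ B) ∧ ∀ W, IsWall δ W → W = A ∪ B

/-- `(A, B)` is a standard wall. -/
def IsStdWall (L : ℕ) (A B : Set (Set R3)) : Prop := ∃ δ, StdWallIface L A B δ

/-- An admissible family of standard walls. -/
def AdmFam (L : ℕ) (F : Set WallPair) : Prop :=
  (∀ S ∈ F, IsStdWall L S.1 S.2) ∧
  (∀ S ∈ F, ∀ S' ∈ F, S ≠ S' →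
    ∀ h ∈ projW (S.1 ∪ S.2), ∀ h' ∈ projW (S'.1 ∪ S'.2), ¬(h = h' ∨ ZeroConn h h')) ∧
  (∀ S ∈ F, ∀ e : EdgeP, e ∉ edgeCyl L → dualPlq e ∈ S.1 ∪ S.2 →
    (dualPlq e ∈ S.1 ↔ dobMu e = false))

/-- `ρ(h, δ)`: the number of plaquettes of `δ` projecting into `h`. -/
def rho (h : Set R3) (δ : Set (Set R3)) : ℕ := Set.ncard {P | P ∈ δ ∧ projP P ⊆ h}

/-- The centre of a plaquette. -/
def plqCenter (P : Set R3) : R3 :=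
  fun i => (sInf ((fun z => z i) '' P) + sSup ((fun z => z i) '' P)) / 2

/-- The `L^∞` distance `‖h₁, h₂‖` between the centres of two plaquettes. -/
def plqDist (P Q : Set R3) : ℝ := dist (plqCenter P) (plqCenter Q)

/-- Two standard walls are close. -/
def CloseW (L : ℕ) (S T : WallPair) : Prop :=
  ∃ δS δT, StdWallIface L S.1 S.2 δS ∧ StdWallIface L T.1 T.2 δT ∧
    ∃ h ∈ projW (S.1 ∪ S.2), ∃ h' ∈ projW (T.1 ∪ T.2),
      plqDist h h' < Real.sqrt (rho h δS) + Real.sqrt (rho h' δT)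

/-- A group of (standard) walls. -/
def IsGroupW (L : ℕ) (G : Set WallPair) : Prop :=
  AdmFam L G ∧ (∀ S ∈ G, (S.1 ∪ S.2).Nonempty) ∧
    ∀ S ∈ G, ∀ T ∈ G,
      Relation.ReflTransGen (fun a b => a ∈ G ∧ b ∈ G ∧ CloseW L a b) S T

/-- An admissible family of groups of walls. -/
def AdmGFam (L : ℕ) (𝔾 : Set (Set WallPair)) : Prop :=
  (∀ G ∈ 𝔾, IsGroupW L G) ∧
    ∀ G ∈ 𝔾, ∀ G' ∈ 𝔾, G ≠ G' → ∀ S ∈ G, ∀ T ∈ G', ¬ CloseW L S T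

/-- Translation of a plaquette by `t ∈ ℤ³`. -/
def trPlq (t : V3) (P : Set R3) : Set R3 := (fun z => z + toR t) '' P

/-- Translation of a set of plaquettes by `t ∈ ℤ³`. -/
def trSet (t : V3) (H : Set (Set R3)) : Set (Set R3) := trPlq t '' H

/-- The vector `(0, 0, -s)`. -/
def negz (s : ℤ) : V3 := fun i => if i = 2 then -s else 0

/-- The family of standard walls associated with an interface `δ`:
each wall of `δ` translated to altitude `0`. -/
def famOf (δ : Set (Set R3)) : Set WallPair :=
  {S | ∃ W s, IsWall δ W ∧ Altitude δ W s ∧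
      S = (trSet (negz s) (W ∩ δ), trSet (negz s) (W \ δ))}

/-- The family of groups of walls associated with an interface `δ`:
the components of `famOf δ` under closeness. -/
def groupsOf (L : ℕ) (δ : Set (Set R3)) : Set (Set WallPair) :=
  {G | ∃ S₀ ∈ famOf δ, G = {S | S ∈ famOf δ ∧
      Relation.ReflTransGen (fun a b => a ∈ famOf δ ∧ b ∈ famOf δ ∧ CloseW L a b) S₀ S}}

/-- `h` is the origin of the standard wall `S`, relative to the ordering `ord`
of the plaquettes of `δ₀`. -/
def IsOrigin (ord : Set R3 → ℕ) (S : WallPair) (h : Set R3) : Prop :=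
  h ∈ projW (S.1 ∪ S.2) ∧ (∃ h' ∈ regI \ projW (S.1 ∪ S.2), OneConn h h') ∧
    ∀ g ∈ projW (S.1 ∪ S.2), (∃ g' ∈ regI \ projW (S.1 ∪ S.2), OneConn g g') →
      ord h ≤ ord g

/-- `h` is the origin of the group of walls `G`. -/
def IsGOrigin (ord : Set R3 → ℕ) (G : Set WallPair) (h : Set R3) : Prop :=
  (∃ S ∈ G, IsOrigin ord S h) ∧ ∀ S ∈ G, ∀ g, IsOrigin ord S g → ord h ≤ ord g

/-- `N(S) = |A|`. -/
def NW (S : WallPair) : ℕ := S.1.ncard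

/-- `Π(S) = N(S) - |π(S)|`. -/
def PiW (S : WallPair) : ℤ := (NW S : ℤ) - ((projW (S.1 ∪ S.2)).ncard : ℤ)

/-- `Π(G) = Σ_{S ∈ G} Π(S)`. -/
def PiG (G : Set WallPair) : ℤ := ∑ᶠ S ∈ G, PiW S

/-! ### Weak convergence, inside and outside, and displacement -/

/-- Weak convergence of probability measures on the configuration space. -/
def WeakLim (μs : ℕ → Measure Config) (μ : Measure Config) : Prop :=
  ∀ f : BoundedContinuousFunction Config ℝ,
    Tendsto (fun n => ∫ ω, f ω ∂(μs n)) atTop (𝓝 (∫ ω, f ω ∂μ))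

/-- The inside of `T ⊆ ℝ³`. -/
def insR (T : Set R3) : Set R3 :=
  {z | z ∉ T ∧ Bornology.IsBounded (connectedComponentIn Tᶜ z)}

/-- The outside of `T ⊆ ℝ³`. -/
def outR (T : Set R3) : Set R3 :=
  {z | z ∉ T ∧ ¬ Bornology.IsBounded (connectedComponentIn Tᶜ z)}

/-- A splitting set of plaquettes. -/
def IsSplitting (H : Set (Set R3)) : Prop :=
  H.Finite ∧ (∀ P ∈ H, IsPlq P) ∧ SetConn OneConn H ∧ (insR (⋃₀ H)).Nonempty

/-- `h ↔ ∞`: the plaquette `h ∈ δ₀` is joined to infinity by a `1`-connected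
sequence of c-plaquettes of the interface `Δ(ω)` lying in `δ₀`. -/
def HtoInf (L : ℕ) (ω : Config) (h : Set R3) : Prop :=
  ∃ (r : ℕ) (hs : ℕ → Set R3), hs 0 = h ∧ (∀ i < r, OneConn (hs i) (hs (i + 1))) ∧
    (∀ i ≤ r, hs i ∈ regI ∧ hs i ∈ cPlqs (interfaceOf (edgeCyl L) ω)) ∧
    ∃ e, e ∉ edgeCyl L ∧ hs r = dualPlq e

/-- The displacement `D(x, δ)` of the interface `δ` at `x = (a, b, ½)`. -/
def displ (δ : Set (Set R3)) (a b : ℤ) : ℝ :=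
  sSup {r | ∃ d : ℝ, r = |d - 1 / 2| ∧
    (fun i : Fin 3 => if i = 0 then (a : ℝ) else if i = 1 then (b : ℝ) else d) ∈ ⋃₀ δ}
namespace SP

def uvec (j : Fin 3) : V3 := fun i => if i = j then 1 else 0

/-- shift coordinate `j` of `p` by `d`. -/
def shf (p : V3) (j : Fin 3) (d : ℤ) : V3 := fun i => if i = j then p i + d else p i

/-- set coordinate `j` of `p` to `t`. -/
def setc (p : V3) (j : Fin 3) (t : ℤ) : V3 := fun i => if i = j then t else p i

lemma shf_self (p : V3) (j : Fin 3) (d : ℤ) : shf p j d j = p j + d := if_pos rfl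

lemma shf_ne (p : V3) {j i : Fin 3} (d : ℤ) (h : i ≠ j) : shf p j d i = p i := if_neg h

lemma shf_zero (p : V3) (j : Fin 3) : shf p j 0 = p := by
  funext i; simp [shf]

lemma shf_shf (p : V3) (j : Fin 3) (d e : ℤ) : shf (shf p j d) j e = shf p j (d + e) := by
  funext i; by_cases h : i = j <;> simp [shf, h] <;> ring

lemma dist1_shf_shf (p : V3) (j : Fin 3) (a b : ℤ) :
    dist1 (shf p j a) (shf p j b) = |a - b| := by
  have h : ∀ i, |shf p j a i - shf p j b i| = if i = j then |a - b| else 0 := by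
    intro i
    by_cases h : i = j
    · rw [if_pos h]; simp only [shf, if_pos h]; rw [show p i + a - (p i + b) = a - b by ring]
    · rw [if_neg h]; simp [shf, h]
  simp only [dist1, h]
  simp

lemma dist1_shf (p : V3) (j : Fin 3) (d : ℤ) : dist1 p (shf p j d) = |d| := by
  have := dist1_shf_shf p j 0 d
  rw [shf_zero] at this
  rw [this, zero_sub, abs_neg]

lemma dist1_cases {x y : V3} (h : dist1 x y = 1) :
    ∃ j, (∀ i, i ≠ j → x i = y i) ∧ (y j = x j + 1 ∨ y j = x j - 1) := by
  have h3 : |x 0 - y 0| + |x 1 - y 1| + |x 2 - y 2| = 1 := by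
    simpa [dist1, Fin.sum_univ_three] using h
  have habs : ∀ i : Fin 3, |x i - y i| = 1 ↔ (y i = x i + 1 ∨ y i = x i - 1) := by
    intro i
    rw [abs_eq (by norm_num : (0:ℤ) ≤ 1)]
    constructor
    · rintro (h | h) <;> omega
    · rintro (h | h) <;> omega
  have h0 := abs_nonneg (x 0 - y 0)
  have h1 := abs_nonneg (x 1 - y 1)
  have h2 := abs_nonneg (x 2 - y 2)
  have hcase : (|x 0 - y 0| = 1 ∧ |x 1 - y 1| = 0 ∧ |x 2 - y 2| = 0) ∨
      (|x 0 - y 0| = 0 ∧ |x 1 - y 1| = 1 ∧ |x 2 - y 2| = 0) ∨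
      (|x 0 - y 0| = 0 ∧ |x 1 - y 1| = 0 ∧ |x 2 - y 2| = 1) := by omega
  rcases hcase with ⟨ha, hb, hc⟩ | ⟨ha, hb, hc⟩ | ⟨ha, hb, hc⟩
  · refine ⟨0, fun i hi => ?_, (habs 0).mp ha⟩
    rw [abs_eq_zero] at hb hc
    fin_cases i <;> simp_all <;> omega
  · refine ⟨1, fun i hi => ?_, (habs 1).mp hb⟩
    rw [abs_eq_zero] at ha hc
    fin_cases i <;> simp_all <;> omega
  · refine ⟨2, fun i hi => ?_, (habs 2).mp hc⟩
    rw [abs_eq_zero] at ha hb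
    fin_cases i <;> simp_all <;> omega

lemma edge_normal {x y : V3} (h : dist1 x y = 1) :
    ∃ j v, s(x, y) = s(v, shf v j 1) ∧ (v = x ∨ v = y) := by
  obtain ⟨j, hoff, hj | hj⟩ := dist1_cases h
  · refine ⟨j, x, ?_, Or.inl rfl⟩
    have : shf x j 1 = y := by
      funext i
      by_cases hij : i = j
      · subst hij; rw [shf_self]; omega
      · rw [shf_ne _ _ hij]; exact hoff i hij
    rw [this]
  · refine ⟨j, y, ?_, Or.inr rfl⟩
    have : shf y j 1 = x := by
      funext i
      by_cases hij : i = j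
      · subst hij; rw [shf_self]; omega
      · rw [shf_ne _ _ hij]; exact (hoff i hij).symm
    rw [this, Sym2.eq_swap]

lemma lattice_shf (v : V3) (j : Fin 3) : IsLatticeEdge s(v, shf v j 1) :=
  ⟨v, shf v j 1, rfl, by rw [dist1_shf]; rfl⟩

lemma dist1_shf_one (v : V3) (j : Fin 3) : dist1 v (shf v j 1) = 1 := by
  rw [dist1_shf]; rfl

/-! plaquettes in normalized form -/

def mplq (j : Fin 3) (m : R3) : Set R3 :=
  {z | z j = m j ∧ ∀ i, i ≠ j → |z i - m i| ≤ 1 / 2}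

def midp (v : V3) (j : Fin 3) : R3 := fun i => (v i : ℝ) + if i = j then 1 / 2 else 0

lemma plqOf_comm (x y : V3) : plqOf x y = plqOf y x := by
  ext z
  simp only [plqOf, Set.mem_setOf]
  constructor <;> intro hz i <;> obtain ⟨h1, h2⟩ := hz i
  · exact ⟨fun he => by rw [he]; exact h1 he.symm,
      fun he => by rw [h2 (fun hc => he hc.symm)]; ring⟩
  · exact ⟨fun he => by rw [he]; exact h1 he.symm,
      fun he => by rw [h2 (fun hc => he hc.symm)]; ring⟩

lemma mem_dualPlq {x y : V3} {z : R3} : z ∈ dualPlq s(x, y) ↔ z ∈ plqOf x y := by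
  constructor
  · rintro ⟨a, b, hab, hz⟩
    rw [Sym2.eq_iff] at hab
    rcases hab with ⟨rfl, rfl⟩ | ⟨rfl, rfl⟩
    · exact hz
    · rw [plqOf_comm]; exact hz
  · intro h; exact ⟨x, y, rfl, h⟩

lemma dualPlq_unit (v : V3) (j : Fin 3) :
    dualPlq s(v, shf v j 1) = mplq j (midp v j) := by
  ext z
  rw [mem_dualPlq]
  simp only [plqOf, mplq, midp, Set.mem_setOf]
  constructor
  · intro h
    constructor
    · have h2 := (h j).2
      rw [shf_self] at h2
      have := h2 (by omega)
      rw [this]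
      push_cast
      simp
      ring
    · intro i hi
      have h1 := (h i).1
      rw [shf_ne _ _ hi] at h1
      simpa [hi] using h1 rfl
  · rintro ⟨hj, hoff⟩ i
    by_cases hij : i = j
    · subst hij
      rw [shf_self]
      constructor
      · intro he; exfalso; omega
      · intro _; rw [hj]; simp; push_cast; ring
    · rw [shf_ne _ _ hij]
      refine ⟨fun _ => ?_, fun he => absurd rfl he⟩
      simpa [hij] using hoff i hij

lemma midp_mem (v : V3) (j : Fin 3) : midp v j ∈ mplq j (midp v j) :=
  ⟨rfl, fun i _ => by rw [sub_self, abs_zero]; norm_num⟩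

lemma int_eq_of_abs_lt_one {a b : ℤ} (h : |(a : ℝ) - (b : ℝ)| < 1) : a = b := by
  have h1 : |a - b| < 1 := by exact_mod_cast (by push_cast; exact h : |((a - b : ℤ) : ℝ)| < 1)
  have h2 := abs_lt.mp h1
  omega

lemma mplq_eq_midp {v w : V3} {a b : Fin 3}
    (h : mplq a (midp v a) = mplq b (midp w b)) : a = b ∧ v = w := by
  have hm1 : midp v a ∈ mplq b (midp w b) := h ▸ midp_mem v a
  have hm2 : midp w b ∈ mplq a (midp v a) := h.symm ▸ midp_mem w b
  have hab : a = b := by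
    by_contra hab
    -- perturb midp v a at coordinate b by 1/2
    set z : R3 := fun l => if l = b then midp v a l + 1/2 else midp v a l with hzdef
    have hz : z ∈ mplq a (midp v a) := by
      constructor
      · simp only [hzdef, if_neg hab]
      · intro i hi
        simp only [hzdef]
        by_cases hib : i = b
        · rw [if_pos hib, add_sub_cancel_left, abs_of_nonneg (by norm_num : (0:ℝ) ≤ 1/2)]
        · rw [if_neg hib, sub_self, abs_zero]; norm_num
    rw [h] at hz
    have h1 : z b = midp w b b := hz.1
    have h2 : midp v a b = midp w b b := hm1.1
    simp only [hzdef, if_pos rfl] at h1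
    rw [h2] at h1
    norm_num at h1
  subst hab
  refine ⟨rfl, funext fun i => ?_⟩
  by_cases hia : i = a
  · subst hia
    have h1 : midp v i i = midp w i i := hm1.1
    simp only [midp, if_pos] at h1
    have : (v i : ℝ) = w i := by linarith
    exact_mod_cast this
  · have h1 := hm1.2 i hia
    simp only [midp, if_neg hia, add_zero] at h1
    exact int_eq_of_abs_lt_one (lt_of_le_of_lt h1 (by norm_num))

lemma dualPlq_inj {x y x' y' : V3} (h1 : dist1 x y = 1) (h2 : dist1 x' y' = 1)
    (he : dualPlq s(x, y) = dualPlq s(x', y')) : s(x, y) = s(x', y') := by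
  obtain ⟨j, v, hjv, -⟩ := edge_normal h1
  obtain ⟨j', v', hjv', -⟩ := edge_normal h2
  rw [hjv, hjv'] at he ⊢
  rw [dualPlq_unit, dualPlq_unit] at he
  obtain ⟨rfl, rfl⟩ := mplq_eq_midp he
  rfl

lemma lattice_not_mem_mplq (w v : V3) (j : Fin 3) : toR w ∉ mplq j (midp v j) := by
  intro h
  have h1 : (w j : ℝ) = v j + 1/2 := by simpa [toR, midp] using h.1
  have : ((2 * (w j - v j) : ℤ) : ℝ) = 1 := by push_cast; linarith
  have : (2 * (w j - v j) : ℤ) = 1 := by exact_mod_cast this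
  omega

/-! cubes -/

def cube (v : V3) : Set R3 := {z | ∀ i, |z i - (v i : ℝ)| ≤ 1 / 2}

lemma mplq_subset_cubes (v : V3) (j : Fin 3) :
    mplq j (midp v j) ⊆ cube v ∩ cube (shf v j 1) := by
  rintro z ⟨hj, hoff⟩
  constructor <;> intro i <;> by_cases hij : i = j
  · subst hij
    rw [hj]
    have hm : midp v i i = (v i : ℝ) + 1/2 := by simp [midp]
    rw [hm, add_sub_cancel_left, abs_of_nonneg (by norm_num : (0:ℝ) ≤ 1/2)]
  · have := hoff i hij; simpa [midp, hij] using this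
  · subst hij
    rw [hj, shf_self]
    have hm : midp v i i = (v i : ℝ) + 1/2 := by simp [midp]
    rw [hm]
    push_cast
    rw [show (v i : ℝ) + 1/2 - (v i + 1) = -(1/2) by ring, abs_neg,
      abs_of_nonneg (by norm_num : (0:ℝ) ≤ 1/2)]
  · rw [shf_ne _ _ hij]
    have := hoff i hij; simpa [midp, hij] using this

lemma exists_cube (z : R3) : ∃ v : V3, z ∈ cube v := by
  refine ⟨fun i => ⌊z i + 1/2⌋, fun i => ?_⟩
  have h1 := Int.floor_le (z i + 1/2)
  have h2 := Int.lt_floor_add_one (z i + 1/2)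
  rw [abs_le]
  constructor <;> [linarith; linarith]

lemma cube_lattice_eq {w v : V3} (h : toR w ∈ cube v) : v = w := by
  funext i
  have h1 : |(w i : ℝ) - v i| ≤ 1/2 := h i
  have h2 : |(v i : ℝ) - w i| < 1 := by rw [abs_sub_comm]; linarith
  exact int_eq_of_abs_lt_one h2

lemma segment_mplq {u p : V3} {k j : Fin 3} {z : R3}
    (hz : z ∈ segment ℝ (toR u) (toR (shf u k 1)))
    (hm : z ∈ mplq j (midp p j)) : p = u ∧ j = k := by
  obtain ⟨a, b, ha, hb, hab, hz⟩ := hz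
  have hzi : ∀ i, z i = u i + b * (if i = k then 1 else 0) := by
    intro i
    have : z i = a * (u i : ℝ) + b * (shf u k 1 i : ℝ) := by
      rw [← hz]; simp [toR]
    rw [this]
    by_cases hik : i = k
    · subst hik; rw [shf_self, if_pos rfl]; push_cast; linear_combination (u i : ℝ) * hab
    · rw [shf_ne _ _ hik, if_neg hik]; linear_combination (u i : ℝ) * hab
  have hjk : j = k := by
    by_contra hjk
    have h1 : z j = (p j : ℝ) + 1/2 := by simpa [midp] using hm.1
    have h2 : z j = u j := by simpa [hjk] using hzi j
    rw [h2] at h1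
    have : ((2 * (u j - p j) : ℤ) : ℝ) = 1 := by push_cast; linarith
    have : (2 * (u j - p j) : ℤ) = 1 := by exact_mod_cast this
    omega
  subst hjk
  have hoff : ∀ i, i ≠ j → p i = u i := by
    intro i hij
    have h1 := hm.2 i hij
    simp only [midp, if_neg hij, add_zero] at h1
    rw [hzi i, if_neg hij] at h1
    apply (int_eq_of_abs_lt_one _)
    rw [abs_sub_comm]
    calc |(u i : ℝ) - p i| = |u i + b * 0 - p i| := by ring_nf
    _ ≤ 1/2 := by simpa using h1
    _ < 1 := by norm_num
  have hcj : p j = u j := by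
    have h1 : z j = (p j : ℝ) + 1/2 := by simpa [midp] using hm.1
    have h2 : z j = u j + b := by simpa using hzi j
    have hd : (p j : ℝ) - u j = b - 1/2 := by linarith
    have hb1 : b ≤ 1 := by linarith
    have : |(p j : ℝ) - u j| < 1 := by rw [hd]; rw [abs_lt]; constructor <;> linarith
    exact int_eq_of_abs_lt_one this
  refine ⟨funext fun i => ?_, rfl⟩
  by_cases hij : i = j
  · subst hij; exact hcj
  · exact hoff i hij

end SP

namespace SP

lemma third_exists : ∀ a b : Fin 3, a ≠ b →
    ∃ c, c ≠ a ∧ c ≠ b ∧ ∀ i : Fin 3, i = a ∨ i = b ∨ i = c := by decide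

def segS (a b c : Fin 3) (α β γ : ℝ) : Set R3 :=
  {z | z a = α ∧ z b = β ∧ |z c - γ| ≤ 1 / 2}

lemma segS_homeo {a b c : Fin 3} (hca : c ≠ a) (hcb : c ≠ b) (hba : b ≠ a)
    (hcover : ∀ i : Fin 3, i = a ∨ i = b ∨ i = c)
    (α β γ : ℝ) : Nonempty (↥(segS a b c α β γ) ≃ₜ ↥(Set.Icc (0:ℝ) 1)) := by
  refine ⟨Homeomorph.mk (Equiv.mk ?_ ?_ ?_ ?_) ?_ ?_⟩
  · exact fun z => ⟨z.1 c - γ + 1/2, by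
      obtain ⟨-, -, h⟩ := z.2
      rw [abs_le] at h
      constructor <;> [linarith; linarith]⟩
  · refine fun t => ⟨fun i => if i = a then α else if i = b then β else γ + t.1 - 1/2, ?_, ?_, ?_⟩
    · show (if a = a then α else if a = b then β else γ + t.1 - 1/2) = α
      rw [if_pos rfl]
    · show (if b = a then α else if b = b then β else γ + t.1 - 1/2) = β
      rw [if_neg hba, if_pos rfl]
    · show |(if c = a then α else if c = b then β else γ + t.1 - 1/2) - γ| ≤ 1/2
      rw [if_neg hca, if_neg hcb, show γ + t.1 - 1/2 - γ = t.1 - 1/2 by ring]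
      obtain ⟨h0, h1⟩ := t.2
      rw [abs_le]
      constructor <;> linarith
  · rintro ⟨z, hza, hzb, hzc⟩
    apply Subtype.ext
    funext i
    show (if i = a then α else if i = b then β else γ + (z c - γ + 1/2) - 1/2) = z i
    by_cases hia : i = a
    · subst hia; rw [if_pos rfl, hza]
    · rw [if_neg hia]
      by_cases hib : i = b
      · subst hib; rw [if_pos rfl, hzb]
      · rw [if_neg hib]
        have hic : i = c := by rcases hcover i with h | h | h <;> first | exact h | exact absurd h (by assumption)
        subst hic; ring
  · rintro ⟨t, ht⟩
    apply Subtype.ext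
    show (if c = a then α else if c = b then β else γ + t - 1/2) - γ + 1/2 = t
    rw [if_neg hca, if_neg hcb]; ring
  · refine Continuous.subtype_mk ?_ _
    exact (((continuous_apply c).comp continuous_subtype_val).sub continuous_const).add
      continuous_const
  · refine Continuous.subtype_mk ?_ _
    refine continuous_pi fun i => ?_
    by_cases hia : i = a
    · simp only [if_pos hia]; exact continuous_const
    · rw [show (fun t : ↥(Set.Icc (0:ℝ) 1) =>
        if i = a then α else if i = b then β else γ + t.1 - 1/2) = fun t =>
        if i = b then β else γ + t.1 - 1/2 by funext t; rw [if_neg hia]]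
      by_cases hib : i = b
      · simp only [if_pos hib]; exact continuous_const
      · rw [show (fun t : ↥(Set.Icc (0:ℝ) 1) =>
          if i = b then β else γ + t.1 - 1/2) = fun t => γ + t.1 - 1/2 by
            funext t; rw [if_neg hib]]
        exact (continuous_const.add continuous_subtype_val).sub continuous_const

lemma oneConn_of_seg {P₁ P₂ : Set R3} {a b c : Fin 3} (hca : c ≠ a) (hcb : c ≠ b)
    (hba : b ≠ a) (hcover : ∀ i : Fin 3, i = a ∨ i = b ∨ i = c)
    {α β γ : ℝ} (hne : P₁ ≠ P₂) (hint : P₁ ∩ P₂ = segS a b c α β γ) :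
    OneConn P₁ P₂ := by
  refine ⟨hne, ?_⟩
  obtain ⟨e⟩ := segS_homeo hca hcb hba hcover α β γ
  exact ⟨(Homeomorph.setCongr hint).trans e⟩

lemma OneConn.symm' {P Q : Set R3} (h : OneConn P Q) : OneConn Q P := by
  obtain ⟨hne, ⟨e⟩⟩ := h
  exact ⟨hne.symm, ⟨(Homeomorph.setCongr (Set.inter_comm _ _)).trans e⟩⟩

lemma mem_mplq_midp {z : R3} {v : V3} {j : Fin 3} :
    z ∈ mplq j (midp v j) ↔
      (z j = (v j : ℝ) + 1/2 ∧ ∀ i, i ≠ j → |z i - (v i : ℝ)| ≤ 1/2) := by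
  simp only [mplq, midp, Set.mem_setOf, if_pos rfl]
  constructor
  · rintro ⟨h1, h2⟩
    refine ⟨by simpa using h1, fun i hi => by simpa [hi] using h2 i hi⟩
  · rintro ⟨h1, h2⟩
    refine ⟨by simpa using h1, fun i hi => by simpa [hi] using h2 i hi⟩

lemma abs_half : |(1:ℝ)/2| ≤ 1/2 := by
  rw [abs_of_nonneg] <;> norm_num

/-- intersections of the four plaquettes of a square are all this segment -/
lemma seg_target (u : V3) (a b c : Fin 3) : segS a b c ((u a : ℝ) + 1/2) ((u b : ℝ) + 1/2)
    ((u c : ℝ)) = segS a b c ((u a : ℝ) + 1/2) ((u b : ℝ) + 1/2) ((u c : ℝ)) := rfl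

section SquarePlaquettes

variable {u : V3} {a b : Fin 3} (hab : a ≠ b)

lemma oneConn_I (hab : a ≠ b) :
    OneConn (dualPlq s(u, shf u a 1)) (dualPlq s(u, shf u b 1)) := by
  obtain ⟨c, hca, hcb, hcover⟩ := third_exists a b hab
  apply oneConn_of_seg hca hcb (Ne.symm hab) hcover
    (α := (u a : ℝ) + 1/2) (β := (u b : ℝ) + 1/2) (γ := (u c : ℝ))
  · intro hPP
    have hE := dualPlq_inj (dist1_shf_one u a) (dist1_shf_one u b) hPP
    rw [Sym2.eq_iff] at hE
    rcases hE with ⟨-, h2⟩ | ⟨h1, -⟩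
    · have h := congrFun h2 a
      rw [shf_self, shf_ne _ _ hab] at h
      omega
    · have h := congrFun h1 b
      rw [shf_self] at h
      omega
  · rw [dualPlq_unit, dualPlq_unit]
    ext z
    simp only [Set.mem_inter_iff, mem_mplq_midp, segS, Set.mem_setOf]
    constructor
    · rintro ⟨⟨h1, h1off⟩, ⟨h2, h2off⟩⟩
      exact ⟨h1, h2, h1off c hca⟩
    · rintro ⟨h1, h2, h3⟩
      refine ⟨⟨h1, fun i hi => ?_⟩, ⟨h2, fun i hi => ?_⟩⟩
      · rcases hcover i with rfl | rfl | rfl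
        · exact absurd rfl hi
        · rw [h2, add_sub_cancel_left]; exact abs_half
        · exact h3
      · rcases hcover i with rfl | rfl | rfl
        · rw [h1, add_sub_cancel_left]; exact abs_half
        · exact absurd rfl hi
        · exact h3

lemma oneConn_II (hab : a ≠ b) :
    OneConn (dualPlq s(u, shf u a 1)) (dualPlq s(shf u a 1, shf (shf u a 1) b 1)) := by
  obtain ⟨c, hca, hcb, hcover⟩ := third_exists a b hab
  apply oneConn_of_seg hca hcb (Ne.symm hab) hcover
    (α := (u a : ℝ) + 1/2) (β := (u b : ℝ) + 1/2) (γ := (u c : ℝ))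
  · intro hPP
    have hE := dualPlq_inj (dist1_shf_one u a) (dist1_shf_one (shf u a 1) b) hPP
    rw [Sym2.eq_iff] at hE
    rcases hE with ⟨h1, -⟩ | ⟨h1, -⟩
    · have h := congrFun h1 a
      rw [shf_self] at h
      omega
    · have h := congrFun h1 a
      rw [shf_ne _ _ hab, shf_self] at h
      omega
  · rw [dualPlq_unit, dualPlq_unit]
    ext z
    simp only [Set.mem_inter_iff, mem_mplq_midp, segS, Set.mem_setOf]
    constructor
    · rintro ⟨⟨h1, h1off⟩, ⟨h2, h2off⟩⟩
      rw [shf_ne _ _ (Ne.symm hab)] at h2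
      refine ⟨h1, h2, ?_⟩
      exact h1off c hca
    · rintro ⟨h1, h2, h3⟩
      refine ⟨⟨h1, fun i hi => ?_⟩, ⟨?_, fun i hi => ?_⟩⟩
      · rcases hcover i with rfl | rfl | rfl
        · exact absurd rfl hi
        · rw [h2, add_sub_cancel_left]; exact abs_half
        · exact h3
      · rw [shf_ne _ _ (Ne.symm hab)]; exact h2
      · rcases hcover i with rfl | rfl | rfl
        · rw [shf_self, h1]
          push_cast
          rw [show (u i : ℝ) + 1/2 - (u i + 1) = -(1/2) by ring, abs_neg]
          exact abs_half
        · exact absurd rfl hi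
        · rw [shf_ne _ _ hca]; exact h3

lemma oneConn_III (hab : a ≠ b) :
    OneConn (dualPlq s(u, shf u a 1)) (dualPlq s(shf u b 1, shf (shf u b 1) a 1)) := by
  obtain ⟨c, hca, hcb, hcover⟩ := third_exists a b hab
  apply oneConn_of_seg hca hcb (Ne.symm hab) hcover
    (α := (u a : ℝ) + 1/2) (β := (u b : ℝ) + 1/2) (γ := (u c : ℝ))
  · intro hPP
    have hE := dualPlq_inj (dist1_shf_one u a) (dist1_shf_one (shf u b 1) a) hPP
    rw [Sym2.eq_iff] at hE
    rcases hE with ⟨h1, -⟩ | ⟨h1, -⟩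
    · have h := congrFun h1 b
      rw [shf_self] at h
      omega
    · have h := congrFun h1 b
      rw [shf_ne _ _ (Ne.symm hab), shf_self] at h
      omega
  · rw [dualPlq_unit, dualPlq_unit]
    ext z
    simp only [Set.mem_inter_iff, mem_mplq_midp, segS, Set.mem_setOf]
    constructor
    · rintro ⟨⟨h1, h1off⟩, ⟨h2, h2off⟩⟩
      rw [shf_ne _ _ hab] at h2
      refine ⟨h1, ?_, h1off c hca⟩
      have hx := h1off b (Ne.symm hab)
      have hy := h2off b (Ne.symm hab)
      rw [shf_self] at hy
      push_cast at hy
      rw [abs_le] at hx hy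
      have := hx.1; have := hx.2; have := hy.1; have := hy.2
      linarith
    · rintro ⟨h1, h2, h3⟩
      refine ⟨⟨h1, fun i hi => ?_⟩, ⟨?_, fun i hi => ?_⟩⟩
      · rcases hcover i with rfl | rfl | rfl
        · exact absurd rfl hi
        · rw [h2, add_sub_cancel_left]; exact abs_half
        · exact h3
      · rw [shf_ne _ _ hab]; exact h1
      · rcases hcover i with rfl | rfl | rfl
        · exact absurd rfl hi
        · rw [shf_self, h2]
          push_cast
          rw [show (u i : ℝ) + 1/2 - (u i + 1) = -(1/2) by ring, abs_neg]
          exact abs_half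
        · rw [shf_ne _ _ hcb]; exact h3

lemma oneConn_V (hab : a ≠ b) :
    OneConn (dualPlq s(shf u b 1, shf (shf u b 1) a 1))
      (dualPlq s(shf u a 1, shf (shf u a 1) b 1)) := by
  obtain ⟨c, hca, hcb, hcover⟩ := third_exists a b hab
  apply oneConn_of_seg hca hcb (Ne.symm hab) hcover
    (α := (u a : ℝ) + 1/2) (β := (u b : ℝ) + 1/2) (γ := (u c : ℝ))
  · intro hPP
    have hE := dualPlq_inj (dist1_shf_one (shf u b 1) a) (dist1_shf_one (shf u a 1) b) hPP
    rw [Sym2.eq_iff] at hE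
    rcases hE with ⟨h1, -⟩ | ⟨h1, -⟩
    · have h := congrFun h1 a
      rw [shf_ne _ _ hab, shf_self] at h
      omega
    · have h := congrFun h1 a
      rw [shf_ne _ _ hab, shf_ne _ _ hab, shf_self] at h
      omega
  · rw [dualPlq_unit, dualPlq_unit]
    ext z
    simp only [Set.mem_inter_iff, mem_mplq_midp, segS, Set.mem_setOf]
    constructor
    · rintro ⟨⟨h1, h1off⟩, ⟨h2, h2off⟩⟩
      rw [shf_ne _ _ hab] at h1
      rw [shf_ne _ _ (Ne.symm hab)] at h2
      refine ⟨h1, h2, ?_⟩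
      have := h1off c hca
      rw [shf_ne _ _ hcb] at this
      exact this
    · rintro ⟨h1, h2, h3⟩
      refine ⟨⟨?_, fun i hi => ?_⟩, ⟨?_, fun i hi => ?_⟩⟩
      · rw [shf_ne _ _ hab]; exact h1
      · rcases hcover i with rfl | rfl | rfl
        · exact absurd rfl hi
        · rw [shf_self, h2]
          push_cast
          rw [show (u i : ℝ) + 1/2 - (u i + 1) = -(1/2) by ring, abs_neg]
          exact abs_half
        · rw [shf_ne _ _ hcb]; exact h3
      · rw [shf_ne _ _ (Ne.symm hab)]; exact h2
      · rcases hcover i with rfl | rfl | rfl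
        · rw [shf_self, h1]
          push_cast
          rw [show (u i : ℝ) + 1/2 - (u i + 1) = -(1/2) by ring, abs_neg]
          exact abs_half
        · exact absurd rfl hi
        · rw [shf_ne _ _ hca]; exact h3

end SquarePlaquettes

end SP

namespace SP

def Conn (B : Set V3) (x y : V3) : Prop :=
  Relation.ReflTransGen (fun a b => a ∉ B ∧ b ∉ B ∧ dist1 a b = 1) x y

lemma conn_symm {B : Set V3} {x y : V3} (h : Conn B x y) : Conn B y x :=
  @Std.Symm.symm _ _ (@Relation.ReflTransGen.stdSymm _ _
    ⟨fun _ _ h => ⟨h.2.1, h.1, by rw [dist1_comm]; exact h.2.2⟩⟩) _ _ h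

lemma conn_trans {B : Set V3} {x y z : V3} (h1 : Conn B x y) (h2 : Conn B y z) :
    Conn B x z := Relation.ReflTransGen.trans h1 h2

def CompOut (B : Set V3) (y : V3) : Set V3 := {z | Conn B y z}

lemma compOut_congr {B : Set V3} {x y : V3} (h : Conn B x y) :
    CompOut B x = CompOut B y := by
  ext z
  exact ⟨fun hz => conn_trans (conn_symm h) hz, fun hz => conn_trans h hz⟩

/-- The union of `Vs` with the finite components of its complement. -/
def UU (Vs : Set V3) : Set V3 := {y | (CompOut Vs y).Finite}

lemma v_subset_UU (Vs : Set V3) : Vs ⊆ UU Vs := by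
  intro v hv
  have : CompOut Vs v ⊆ {v} := by
    intro z hz
    rcases Relation.ReflTransGen.cases_head hz with rfl | ⟨c, hc, -⟩
    · exact rfl
    · exact absurd hv hc.1
  exact Set.Finite.subset (Set.finite_singleton v) this

lemma setc_eq_shf (p : V3) (j : Fin 3) (t : ℤ) : setc p j t = shf p j (t - p j) := by
  funext i; by_cases h : i = j <;> simp [setc, shf, h]

lemma setc_self (p : V3) (j : Fin 3) (t : ℤ) : setc p j t j = t := if_pos rfl

lemma setc_ne (p : V3) {j i : Fin 3} (t : ℤ) (h : i ≠ j) : setc p j t i = p i := if_neg h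

lemma dist1_setc (p : V3) (j : Fin 3) (t : ℤ) : dist1 p (setc p j t) = |t - p j| := by
  rw [setc_eq_shf, dist1_shf]

lemma dist1_nonneg (u v : V3) : 0 ≤ dist1 u v :=
  Finset.sum_nonneg fun i _ => abs_nonneg _

lemma dist1_eq_zero {u v : V3} (h : dist1 u v = 0) : u = v := by
  funext i
  have h1 : |u i - v i| ≤ dist1 u v :=
    Finset.single_le_sum (f := fun l => |u l - v l|) (fun l _ => abs_nonneg _)
      (Finset.mem_univ i)
  rw [h] at h1
  have := abs_nonneg (u i - v i)
  have h2 : |u i - v i| = 0 := le_antisymm h1 this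
  rw [abs_eq_zero] at h2
  omega

lemma conn_walk {B : Set V3} (p : V3) (j : Fin 3) (d : ℤ) (hd : d = 1 ∨ d = -1) :
    ∀ n : ℕ, (∀ m : ℕ, m ≤ n → shf p j (d * m) ∉ B) → Conn B p (shf p j (d * n)) := by
  intro n
  induction n with
  | zero =>
    intro _
    rw [Nat.cast_zero, mul_zero, shf_zero]
    exact Relation.ReflTransGen.refl
  | succ n ih =>
    intro hg
    refine Relation.ReflTransGen.tail (ih fun m hm => hg m (by omega)) ?_
    refine ⟨hg n (by omega), hg (n + 1) le_rfl, ?_⟩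
    rw [dist1_shf_shf]
    push_cast
    rw [show d * (n:ℤ) - d * ((n:ℤ) + 1) = -d by ring, abs_neg]
    rcases hd with rfl | rfl <;> norm_num

lemma conn_setc {B : Set V3} (p : V3) (j : Fin 3) (t : ℤ)
    (hg : ∀ s : ℤ, min (p j) t ≤ s → s ≤ max (p j) t → setc p j s ∉ B) :
    Conn B p (setc p j t) := by
  rcases le_or_gt (p j) t with hle | hlt
  · have h1 : setc p j t = shf p j (1 * (t - p j).toNat) := by
      rw [setc_eq_shf]; congr 1; rw [one_mul, Int.toNat_of_nonneg (by omega)]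
    rw [h1]
    apply conn_walk p j 1 (Or.inl rfl)
    intro m hm
    have h2 : shf p j (1 * m) = setc p j (p j + m) := by
      rw [setc_eq_shf]; congr 1; push_cast; ring
    rw [h2]
    refine hg _ ?_ ?_
    · rw [min_eq_left hle]; omega
    · rw [max_eq_right hle]; omega
  · have h1 : setc p j t = shf p j ((-1) * (p j - t).toNat) := by
      rw [setc_eq_shf]; congr 1
      rw [neg_one_mul, Int.toNat_of_nonneg (by omega)]
      ring
    rw [h1]
    apply conn_walk p j (-1) (Or.inr rfl)
    intro m hm
    have h2 : shf p j ((-1) * m) = setc p j (p j - m) := by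
      rw [setc_eq_shf]; congr 1; push_cast; ring
    rw [h2]
    refine hg _ ?_ ?_
    · rw [min_eq_right hlt.le]; omega
    · rw [max_eq_left hlt.le]; omega

def boxZ (R : ℤ) : Set V3 := {p | ∀ i, |p i| ≤ R}

lemma boxZ_finite (R : ℤ) : (boxZ R).Finite := by
  have h : (Set.univ.pi fun _ : Fin 3 => Set.Icc (-R) R).Finite :=
    Set.Finite.pi fun _ => Set.finite_Icc _ _
  refine h.subset ?_
  intro p hp i _
  exact Set.mem_Icc.mpr (abs_le.mp (hp i))

section WithBox

variable {Vs : Set V3} {R : ℤ}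

lemma not_UU_of_big (hbox : ∀ v ∈ Vs, ∀ i, |v i| ≤ R) {p : V3} {i : Fin 3}
    (h : R < |p i|) : p ∉ UU Vs := by
  set d : ℤ := if 0 ≤ p i then 1 else -1 with hd
  have hd1 : d = 1 ∨ d = -1 := by rw [hd]; split_ifs <;> simp
  have hcoord : ∀ n : ℕ, R < |p i + d * n| := by
    intro n
    rcases le_or_gt 0 (p i) with h0 | h0
    · rw [hd, if_pos h0]
      rw [abs_of_nonneg h0] at h
      rw [abs_of_nonneg (by omega)]
      omega
    · rw [hd, if_neg (not_le.mpr h0)]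
      rw [abs_of_neg h0] at h
      rw [abs_of_neg (show p i + (-1) * (n:ℤ) < 0 by omega)]
      omega
  have hmem : ∀ n : ℕ, shf p i (d * n) ∈ CompOut Vs p := by
    intro n
    apply conn_walk p i d hd1
    intro m _ hv
    have hb := hbox _ hv i
    rw [shf_self] at hb
    exact absurd hb (not_le.mpr (hcoord m))
  have hinj : Function.Injective (fun n : ℕ => shf p i (d * n)) := by
    intro m n hmn
    have h2 : shf p i (d * m) i = shf p i (d * n) i := congrFun hmn i
    rw [shf_self, shf_self] at h2
    rcases hd1 with hh | hh <;> rw [hh] at h2 <;> omega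
  intro hU
  exact Set.infinite_of_injective_forall_mem hinj hmem hU

lemma UU_subset_box (hbox : ∀ v ∈ Vs, ∀ i, |v i| ≤ R) : UU Vs ⊆ boxZ R := by
  intro p hp i
  by_contra h
  exact not_UU_of_big hbox (not_le.mp h) hp

lemma conn_corner (hbox : ∀ v ∈ Vs, ∀ i, |v i| ≤ R) (hR : 0 ≤ R) {p : V3}
    (h : ∃ i, R < |p i|) : Conn (UU Vs) p (fun _ => R + 1) := by
  obtain ⟨i, hi⟩ := h
  obtain ⟨j, k, hji, hki, hjk, hcover⟩ :
      ∃ j k, j ≠ i ∧ k ≠ i ∧ j ≠ k ∧ ∀ l : Fin 3, l = i ∨ l = j ∨ l = k := by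
    fin_cases i
    · exact ⟨1, 2, by decide, by decide, by decide, by decide⟩
    · exact ⟨0, 2, by decide, by decide, by decide, by decide⟩
    · exact ⟨0, 1, by decide, by decide, by decide, by decide⟩
  set p1 := setc p j (R + 1) with hp1
  set p2 := setc p1 k (R + 1) with hp2
  have leg1 : Conn (UU Vs) p p1 := by
    apply conn_setc
    intro s _ _
    apply not_UU_of_big hbox (i := i)
    rw [setc_ne _ _ hji.symm]
    exact hi
  have leg2 : Conn (UU Vs) p1 p2 := by
    apply conn_setc
    intro s _ _
    apply not_UU_of_big hbox (i := i)
    rw [setc_ne _ _ hki.symm, hp1, setc_ne _ _ hji.symm]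
    exact hi
  have hp2j : p2 j = R + 1 := by
    rw [hp2, setc_ne _ _ hjk, hp1, setc_self]
  have leg3 : Conn (UU Vs) p2 (setc p2 i (R + 1)) := by
    apply conn_setc
    intro s _ _
    apply not_UU_of_big hbox (i := j)
    rw [setc_ne _ _ hji, hp2j]
    rw [abs_of_nonneg (by omega)]
    omega
  have hend : setc p2 i (R + 1) = (fun _ : Fin 3 => R + 1) := by
    funext l
    rcases hcover l with rfl | rfl | rfl
    · exact setc_self _ _ _
    · rw [setc_ne _ _ hji, hp2j]
    · rw [setc_ne _ _ hki, hp2, setc_self]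
  exact conn_trans (conn_trans leg1 leg2) (hend ▸ leg3)

lemma conn_UU_of_conn_V {b z : V3} (hb : b ∉ UU Vs) (h : Conn Vs b z) :
    Conn (UU Vs) b z := by
  induction h with
  | refl => exact Relation.ReflTransGen.refl
  | @tail c d h1 h2 ih =>
    have hc : c ∉ UU Vs := by
      rw [UU, Set.mem_setOf, ← compOut_congr h1]
      exact hb
    have hd : d ∉ UU Vs := by
      rw [UU, Set.mem_setOf, ← compOut_congr (h1.tail h2)]
      exact hb
    exact ih.tail ⟨hc, hd, h2.2.2⟩

lemma exists_escape (hbox : ∀ v ∈ Vs, ∀ i, |v i| ≤ R) {b : V3} (hb : b ∉ UU Vs) :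
    ∃ z, Conn Vs b z ∧ ∃ i, R < |z i| := by
  have hinf : (CompOut Vs b).Infinite := hb
  obtain ⟨z, hz1, hz2⟩ := hinf.exists_notMem_finite (boxZ_finite R)
  refine ⟨z, hz1, ?_⟩
  by_contra h
  push_neg at h
  exact hz2 fun i => h i

lemma conn_UU_of_not_mem (hbox : ∀ v ∈ Vs, ∀ i, |v i| ≤ R) (hR : 0 ≤ R) {x y : V3}
    (hx : x ∉ UU Vs) (hy : y ∉ UU Vs) : Conn (UU Vs) x y := by
  have hxc : Conn (UU Vs) x (fun _ => R + 1) := by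
    obtain ⟨z, hz1, hz2⟩ := exists_escape hbox hx
    have hzU : z ∉ UU Vs := by
      rw [UU, Set.mem_setOf, ← compOut_congr hz1]
      exact hx
    exact conn_trans (conn_UU_of_conn_V hx hz1) (conn_corner hbox hR hz2)
  have hyc : Conn (UU Vs) y (fun _ => R + 1) := by
    obtain ⟨z, hz1, hz2⟩ := exists_escape hbox hy
    exact conn_trans (conn_UU_of_conn_V hy hz1) (conn_corner hbox hR hz2)
  exact conn_trans hxc (conn_symm hyc)

end WithBox

lemma inner_V {Vs : Set V3} {x y : V3} (hx : x ∈ UU Vs) (hy : y ∉ UU Vs)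
    (hxy : dist1 x y = 1) : x ∈ Vs := by
  by_contra hxV
  have hyV : y ∉ Vs := fun h => hy (v_subset_UU Vs h)
  have h1 : Conn Vs x y := Relation.ReflTransGen.single ⟨hxV, hyV, hxy⟩
  rw [UU, Set.mem_setOf, compOut_congr h1] at hx
  exact hy hx

/-- The splitting set: plaquettes dual to edges from `UU Vs` to its complement. -/
def bdryQ (Vs : Set V3) : Set (Set R3) :=
  {P | ∃ a b : V3, a ∈ UU Vs ∧ b ∉ UU Vs ∧ dist1 a b = 1 ∧ P = dualPlq s(a, b)}

lemma dual_mem_bdryQ_iff {Vs : Set V3} {x y : V3} (h : dist1 x y = 1) :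
    dualPlq s(x, y) ∈ bdryQ Vs ↔
      ((x ∈ UU Vs ∧ y ∉ UU Vs) ∨ (x ∉ UU Vs ∧ y ∈ UU Vs)) := by
  constructor
  · rintro ⟨a, b, ha, hb, hab, heq⟩
    have := dualPlq_inj h hab heq
    rw [Sym2.eq_iff] at this
    rcases this with ⟨rfl, rfl⟩ | ⟨rfl, rfl⟩
    · exact Or.inl ⟨ha, hb⟩
    · exact Or.inr ⟨hb, ha⟩
  · rintro (⟨hx, hy⟩ | ⟨hx, hy⟩)
    · exact ⟨x, y, hx, hy, h, rfl⟩
    · exact ⟨y, x, hy, hx, by rw [dist1_comm]; exact h, by rw [Sym2.eq_swap]⟩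

lemma abs_int_le_one_of_cubes {z : R3} {u v : V3} (hu : z ∈ cube u) (hv : z ∈ cube v)
    (i : Fin 3) : |u i - v i| ≤ 1 := by
  have h1 := hu i
  have h2 := hv i
  rw [abs_le] at h1 h2
  have h3 : |(u i : ℝ) - v i| ≤ 1 := by
    rw [abs_le]
    constructor <;> [linarith [h1.1, h2.2]; linarith [h1.2, h2.1]]
  exact_mod_cast (by push_cast; exact h3 : |((u i - v i : ℤ) : ℝ)| ≤ ((1:ℤ) : ℝ))

lemma face_walk {Vs : Set V3} {z : R3} :
    ∀ k : ℕ, ∀ u v : V3, dist1 u v ≤ k → z ∈ cube u → z ∈ cube v →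
      u ∈ UU Vs → v ∉ UU Vs → ∃ P ∈ bdryQ Vs, z ∈ P := by
  intro k
  induction k with
  | zero =>
    intro u v hd hcu hcv hu hv
    have : u = v := dist1_eq_zero (le_antisymm hd (dist1_nonneg u v))
    exact absurd (this ▸ hu) hv
  | succ k ih =>
    intro u v hd hcu hcv hu hv
    have hne : u ≠ v := fun h => hv (h ▸ hu)
    have hex : ∃ i, u i ≠ v i := by
      by_contra h
      push_neg at h
      exact hne (funext h)
    obtain ⟨i, hi⟩ := hex
    have habs : |u i - v i| = 1 := by
      have h1 := abs_int_le_one_of_cubes hcu hcv i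
      rw [abs_le] at h1
      rw [abs_eq (by norm_num : (0:ℤ) ≤ 1)]
      have : u i - v i ≠ 0 := fun h => hi (by omega)
      omega
    have hcu' : z ∈ cube (setc u i (v i)) := by
      intro l
      by_cases hl : l = i
      · rw [hl, setc_self]; exact hcv i
      · rw [setc_ne _ _ hl]; exact hcu l
    have hdd : dist1 (setc u i (v i)) v + |u i - v i| = dist1 u v := by
      rw [dist1, dist1, ← Finset.sum_erase_add _ _ (Finset.mem_univ i),
        ← Finset.sum_erase_add _ _ (Finset.mem_univ i)]
      have he : ∀ l ∈ Finset.univ.erase i, |setc u i (v i) l - v l| = |u l - v l| := by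
        intro l hl
        rw [setc_ne _ _ (Finset.mem_erase.mp hl).1]
      rw [Finset.sum_congr rfl he, setc_self, sub_self, abs_zero, add_zero]
    have hdu' : dist1 u (setc u i (v i)) = 1 := by
      rw [dist1_setc]
      rw [abs_sub_comm] at habs
      exact habs
    have hmem_plq : z ∈ dualPlq s(u, setc u i (v i)) := by
      have hval : v i = u i + 1 ∨ v i = u i - 1 := by
        rw [abs_eq (by norm_num : (0:ℤ) ≤ 1)] at habs
        omega
      rcases hval with hval | hval
      · have heq : setc u i (v i) = shf u i 1 := by
          funext l
          by_cases hl : l = i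
          · rw [hl, setc_self, shf_self]; omega
          · rw [setc_ne _ _ hl, shf_ne _ _ hl]
        rw [heq, dualPlq_unit, mem_mplq_midp]
        constructor
        · have h1 := hcu i
          have h2 := hcv i
          rw [hval] at h2
          push_cast at h2
          rw [abs_le] at h1 h2
          linarith [h1.1, h1.2, h2.1, h2.2]
        · intro l hl
          exact hcu l
      · obtain ⟨w, hw⟩ : ∃ w, setc u i (v i) = w := ⟨_, rfl⟩
        have heq : u = shf w i 1 := by
          funext l
          by_cases hl : l = i
          · rw [hl, shf_self, ← hw, setc_self]; omega
          · rw [shf_ne _ _ hl, ← hw, setc_ne _ _ hl]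
        rw [hw, show s(u, w) = s(w, shf w i 1) from by rw [Sym2.eq_swap, heq]]
        rw [dualPlq_unit, mem_mplq_midp]
        constructor
        · rw [← hw, setc_self]
          have h1 := hcu i
          have h2 := hcv i
          rw [hval] at h2
          push_cast at h2
          rw [abs_le] at h1 h2
          have hv2 : (v i : ℝ) = (u i : ℝ) - 1 := by rw [hval]; push_cast; ring
          rw [hv2]
          linarith [h1.1, h1.2, h2.1, h2.2]
        · intro l hl
          rw [← hw, setc_ne _ _ hl]
          exact hcu l
    by_cases hu'U : setc u i (v i) ∈ UU Vs
    · apply ih (setc u i (v i)) v _ hcu' hcv hu'U hv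
      rw [habs] at hdd
      push_cast at hd
      omega
    · exact ⟨dualPlq s(u, setc u i (v i)), ⟨u, setc u i (v i), hu, hu'U, hdu', rfl⟩, hmem_plq⟩

end SP

namespace SP

lemma zmod2_add_self (a : ZMod 2) : a + a = 0 := by revert a; decide

lemma zmod2_cancel {a b : ZMod 2} (h : a + b = 0) : a = b := by revert h; revert a b; decide

lemma zmod2_four (a b c d : ZMod 2) : (a + b) + (c + d) + (a + c) + (b + d) = 0 := by
  revert a b c d; decide

lemma zmod2_shift {a b c : ZMod 2} (h : a + b + c = 0) : c = a + b := by
  revert h; revert a b c; decide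

lemma shf_comm {a b : Fin 3} (hab : a ≠ b) (u : V3) (d e : ℤ) :
    shf (shf u a d) b e = shf (shf u b e) a d := by
  funext i
  by_cases hia : i = a
  · rw [hia, shf_ne _ _ hab, shf_self, shf_self, shf_ne _ _ hab]
  · by_cases hib : i = b
    · rw [hib, shf_self, shf_ne _ _ hab.symm, shf_ne _ _ hab.symm, shf_self]
    · rw [shf_ne _ _ hib, shf_ne _ _ hia, shf_ne _ _ hia, shf_ne _ _ hib]

lemma dist1_shf_both (x y : V3) (j : Fin 3) (d : ℤ) :
    dist1 (shf x j d) (shf y j d) = dist1 x y := by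
  unfold dist1
  refine Finset.sum_congr rfl fun i _ => ?_
  by_cases h : i = j
  · rw [h, shf_self, shf_self]; ring_nf
  · rw [shf_ne _ _ h, shf_ne _ _ h]

def chi (S₁ : Set (Set R3)) (e : EdgeP) : ZMod 2 := if dualPlq e ∈ S₁ then 1 else 0

def vedge (x : V3) (n : ℤ) : EdgeP := s(shf x 2 n, shf x 2 (n + 1))

lemma dist1_vedge (x : V3) (n : ℤ) : dist1 (shf x 2 n) (shf x 2 (n + 1)) = 1 := by
  rw [dist1_shf_shf]; norm_num

def phi (S₁ : Set (Set R3)) (R : ℤ) (x : V3) : ZMod 2 :=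
  ∑ n ∈ Finset.range (R + 1 - x 2).toNat, chi S₁ (vedge x n)

section Parity

variable {Vs : Set V3} {R : ℤ} {S₁ : Set (Set R3)}

/-- if a dual plaquette belongs to `bdryQ` then one endpoint lies in the box -/
lemma bdry_endpoint_box (hbox : ∀ v ∈ Vs, ∀ i, |v i| ≤ R) {x y : V3}
    (h : dist1 x y = 1) (hQ : dualPlq s(x, y) ∈ bdryQ Vs) :
    (∀ i, |x i| ≤ R) ∨ (∀ i, |y i| ≤ R) := by
  rcases (dual_mem_bdryQ_iff h).mp hQ with ⟨hx, -⟩ | ⟨-, hy⟩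
  · exact Or.inl fun i => UU_subset_box hbox hx i
  · exact Or.inr fun i => UU_subset_box hbox hy i

lemma chi_vedge_zero (hbox : ∀ v ∈ Vs, ∀ i, |v i| ≤ R) (hS₁Q : S₁ ⊆ bdryQ Vs)
    {x : V3} {n : ℕ} (hn : (R + 1 - x 2).toNat ≤ n) : chi S₁ (vedge x n) = 0 := by
  unfold chi
  rw [if_neg]
  intro hmem
  have hQ := hS₁Q hmem
  rcases bdry_endpoint_box hbox (dist1_vedge x n) hQ with hb | hb
  · have := hb 2; rw [shf_self] at this
    rw [abs_le] at this
    omega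
  · have := hb 2; rw [shf_self] at this
    rw [abs_le] at this
    omega

lemma phi_eq_sum (hbox : ∀ v ∈ Vs, ∀ i, |v i| ≤ R) (hS₁Q : S₁ ⊆ bdryQ Vs) (x : V3)
    {N : ℕ} (hN : (R + 1 - x 2).toNat ≤ N) :
    phi S₁ R x = ∑ n ∈ Finset.range N, chi S₁ (vedge x n) := by
  unfold phi
  refine Finset.sum_subset (Finset.range_subset_range.mpr hN) ?_
  intro n _ hn
  rw [Finset.mem_range, not_lt] at hn
  exact chi_vedge_zero hbox hS₁Q hn

lemma vedge_shift (x : V3) (n : ℤ) : vedge (shf x 2 1) n = vedge x (n + 1) := by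
  unfold vedge
  rw [shf_shf, shf_shf, add_comm (1:ℤ) n, show (1:ℤ) + (n + 1) = (n + 1) + 1 by ring]

lemma phi_vert (hbox : ∀ v ∈ Vs, ∀ i, |v i| ≤ R) (hS₁Q : S₁ ⊆ bdryQ Vs) (x : V3) :
    phi S₁ R x + phi S₁ R (shf x 2 1) = chi S₁ s(x, shf x 2 1) := by
  set y := shf x 2 1 with hy
  set K := max (R + 1 - y 2).toNat ((R + 1 - x 2).toNat) with hK
  have hx : phi S₁ R x = ∑ n ∈ Finset.range (K + 1), chi S₁ (vedge x n) :=
    phi_eq_sum hbox hS₁Q x (le_trans (le_max_right _ _) (Nat.le_succ_of_le le_rfl))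
  have hyK : phi S₁ R y = ∑ n ∈ Finset.range K, chi S₁ (vedge y n) :=
    phi_eq_sum hbox hS₁Q y (le_max_left _ _)
  have hsum : ∑ n ∈ Finset.range (K + 1), chi S₁ (vedge x n) =
      (∑ n ∈ Finset.range K, chi S₁ (vedge x (n + 1))) + chi S₁ (vedge x 0) := by
    have := Finset.sum_range_succ' (fun n : ℕ => chi S₁ (vedge x n)) K
    simpa using this
  have hterm : ∀ n : ℕ, chi S₁ (vedge x ((n : ℤ) + 1)) = chi S₁ (vedge y n) := by
    intro n
    rw [hy, vedge_shift]
  have hzero : vedge x 0 = s(x, y) := by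
    unfold vedge
    rw [shf_zero, zero_add, hy]
  rw [hx, hyK, hsum, hzero]
  have hre : (∑ n ∈ Finset.range K, chi S₁ (vedge x ((n : ℤ) + 1))) =
      ∑ n ∈ Finset.range K, chi S₁ (vedge y n) :=
    Finset.sum_congr rfl fun n _ => hterm n
  rw [hre]
  have h2 := zmod2_add_self (∑ n ∈ Finset.range K, chi S₁ (vedge y n))
  calc (∑ n ∈ Finset.range K, chi S₁ (vedge y n)) + chi S₁ s(x, y) +
        ∑ n ∈ Finset.range K, chi S₁ (vedge y n)
      = chi S₁ s(x, y) + ((∑ n ∈ Finset.range K, chi S₁ (vedge y n)) +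
        ∑ n ∈ Finset.range K, chi S₁ (vedge y n)) := by ring
    _ = chi S₁ s(x, y) := by rw [h2, add_zero]

variable (hbox : ∀ v ∈ Vs, ∀ i, |v i| ≤ R) (hS₁Q : S₁ ⊆ bdryQ Vs)
  (hclosed : ∀ P ∈ S₁, ∀ P' ∈ bdryQ Vs, OneConn P P' → P' ∈ S₁)

lemma chi_eq_iU (v : V3) (c : Fin 3)
    (hiff : dualPlq s(v, shf v c 1) ∈ S₁ ↔ dualPlq s(v, shf v c 1) ∈ bdryQ Vs) :
    chi S₁ s(v, shf v c 1) =
      (if v ∈ UU Vs then (1 : ZMod 2) else 0) +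
      (if shf v c 1 ∈ UU Vs then (1 : ZMod 2) else 0) := by
  unfold chi
  rw [show (dualPlq s(v, shf v c 1) ∈ S₁) = (dualPlq s(v, shf v c 1) ∈ bdryQ Vs) from
    propext hiff]
  by_cases h1 : v ∈ UU Vs <;> by_cases h2 : shf v c 1 ∈ UU Vs
  · rw [if_pos h1, if_pos h2, if_neg]
    · decide
    · intro hQ
      rcases (dual_mem_bdryQ_iff (dist1_shf_one v c)).mp hQ with ⟨-, hb⟩ | ⟨ha, -⟩
      · exact hb h2
      · exact ha h1
  · rw [if_pos h1, if_neg h2, if_pos ((dual_mem_bdryQ_iff (dist1_shf_one v c)).mpr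
      (Or.inl ⟨h1, h2⟩))]
    decide
  · rw [if_neg h1, if_pos h2, if_pos ((dual_mem_bdryQ_iff (dist1_shf_one v c)).mpr
      (Or.inr ⟨h1, h2⟩))]
    decide
  · rw [if_neg h1, if_neg h2, if_neg]
    · decide
    · intro hQ
      rcases (dual_mem_bdryQ_iff (dist1_shf_one v c)).mp hQ with ⟨ha, -⟩ | ⟨-, hb⟩
      · exact h1 ha
      · exact h2 hb

include hbox hS₁Q hclosed in
lemma square_core {u : V3} {a : Fin 3} (ha2 : a ≠ 2) :
    chi S₁ s(u, shf u a 1) +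
    chi S₁ s(shf u 2 1, shf (shf u a 1) 2 1) +
    chi S₁ s(u, shf u 2 1) +
    chi S₁ s(shf u a 1, shf (shf u a 1) 2 1) = 0 := by
  have hcomm : shf (shf u a 1) 2 1 = shf (shf u 2 1) a 1 := shf_comm ha2 u 1 1
  nth_rewrite 1 [hcomm]
  set P1 := dualPlq s(u, shf u a 1) with hP1
  set P2 := dualPlq s(shf u 2 1, shf (shf u 2 1) a 1) with hP2
  set P3 := dualPlq s(u, shf u 2 1) with hP3
  set P4 := dualPlq s(shf u a 1, shf (shf u a 1) 2 1) with hP4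
  have c12 : OneConn P1 P2 := oneConn_III ha2
  have c13 : OneConn P1 P3 := oneConn_I ha2
  have c14 : OneConn P1 P4 := oneConn_II ha2
  have c32 : OneConn P3 P2 := oneConn_II (Ne.symm ha2)
  have c34 : OneConn P3 P4 := oneConn_III (Ne.symm ha2)
  have c24 : OneConn P2 P4 := oneConn_V ha2
  by_cases hS : P1 ∈ S₁ ∨ P2 ∈ S₁ ∨ P3 ∈ S₁ ∨ P4 ∈ S₁
  · -- all boundary plaquettes of the square are in S₁
    have key : ∀ P', (P' = P1 ∨ P' = P2 ∨ P' = P3 ∨ P' = P4) → (P' ∈ S₁ ↔ P' ∈ bdryQ Vs) := by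
      intro P' hP'
      constructor
      · intro h; exact hS₁Q h
      · intro hQ
        rcases hS with h | h | h | h <;> rcases hP' with rfl | rfl | rfl | rfl
        · exact h
        · exact hclosed _ h _ hQ c12
        · exact hclosed _ h _ hQ c13
        · exact hclosed _ h _ hQ c14
        · exact hclosed _ h _ hQ (OneConn.symm' c12)
        · exact h
        · exact hclosed _ h _ hQ (OneConn.symm' c32)
        · exact hclosed _ h _ hQ c24
        · exact hclosed _ h _ hQ (OneConn.symm' c13)
        · exact hclosed _ h _ hQ c32
        · exact h
        · exact hclosed _ h _ hQ c34
        · exact hclosed _ h _ hQ (OneConn.symm' c14)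
        · exact hclosed _ h _ hQ (OneConn.symm' c24)
        · exact hclosed _ h _ hQ (OneConn.symm' c34)
        · exact h
    have e1 := chi_eq_iU (Vs := Vs) u a (key P1 (Or.inl rfl))
    have e3 := chi_eq_iU (Vs := Vs) u 2 (key P3 (Or.inr (Or.inr (Or.inl rfl))))
    have e2 : chi S₁ s(shf u 2 1, shf (shf u 2 1) a 1) =
        (if shf u 2 1 ∈ UU Vs then (1 : ZMod 2) else 0) +
        (if shf (shf u 2 1) a 1 ∈ UU Vs then (1 : ZMod 2) else 0) :=
      chi_eq_iU (Vs := Vs) (shf u 2 1) a (key P2 (Or.inr (Or.inl rfl)))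
    have e4 : chi S₁ s(shf u a 1, shf (shf u a 1) 2 1) =
        (if shf u a 1 ∈ UU Vs then (1 : ZMod 2) else 0) +
        (if shf (shf u a 1) 2 1 ∈ UU Vs then (1 : ZMod 2) else 0) :=
      chi_eq_iU (Vs := Vs) (shf u a 1) 2 (key P4 (Or.inr (Or.inr (Or.inr rfl))))
    have hD : (if shf (shf u a 1) 2 1 ∈ UU Vs then (1 : ZMod 2) else 0) =
        (if shf (shf u 2 1) a 1 ∈ UU Vs then (1 : ZMod 2) else 0) := by rw [hcomm]
    rw [e1, e2, e3, e4, hD]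
    exact zmod2_four _ _ _ _
  · push_neg at hS
    obtain ⟨h1, h2, h3, h4⟩ := hS
    unfold chi
    rw [hP1] at h1
    rw [hP2] at h2
    rw [hP3] at h3
    rw [hP4] at h4
    rw [if_neg h1, if_neg h2, if_neg h3, if_neg h4]
    decide

include hbox hS₁Q hclosed in
lemma square_parity {p q : V3} (hpq : dist1 p q = 1) (hz2 : p 2 = q 2) :
    chi S₁ s(p, q) + chi S₁ s(shf p 2 1, shf q 2 1) +
    chi S₁ s(p, shf p 2 1) + chi S₁ s(q, shf q 2 1) = 0 := by
  obtain ⟨j, hoff, hj⟩ := dist1_cases hpq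
  have hj2 : j ≠ 2 := by
    intro h
    rw [h] at hj
    omega
  rcases hj with hj | hj
  · -- q = shf p j 1
    have hq : q = shf p j 1 := by
      funext i
      by_cases hij : i = j
      · rw [hij, shf_self]; omega
      · rw [shf_ne _ _ hij]; exact (hoff i hij).symm
    subst hq
    exact square_core hbox hS₁Q hclosed hj2
  · -- p = shf q j 1
    have hp : p = shf q j 1 := by
      funext i
      by_cases hij : i = j
      · rw [hij, shf_self]; omega
      · rw [shf_ne _ _ hij]; exact hoff i hij
    have hcore := square_core (u := q) (a := j) hbox hS₁Q hclosed hj2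
    rw [← hp] at hcore
    rw [show s(p, q) = s(q, p) from Sym2.eq_swap,
      show s(shf p 2 1, shf q 2 1) = s(shf q 2 1, shf p 2 1) from Sym2.eq_swap]
    linear_combination hcore

include hbox hS₁Q hclosed in
lemma phi_horiz {x y : V3} (hxy : dist1 x y = 1) (hz2 : x 2 = y 2) :
    phi S₁ R x + phi S₁ R y = chi S₁ s(x, y) := by
  set M := (R + 1 - x 2).toNat with hM
  have hMy : (R + 1 - y 2).toNat = M := by rw [hM, hz2]
  -- telescoping
  have hsq : ∀ n : ℕ, chi S₁ s(shf x 2 (n : ℤ), shf y 2 (n : ℤ)) +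
      chi S₁ s(shf x 2 ((n : ℤ) + 1), shf y 2 ((n : ℤ) + 1)) +
      chi S₁ (vedge x n) + chi S₁ (vedge y n) = 0 := by
    intro n
    have hd : dist1 (shf x 2 (n : ℤ)) (shf y 2 (n : ℤ)) = 1 := by
      rw [dist1_shf_both]; exact hxy
    have hz : (shf x 2 (n : ℤ)) 2 = (shf y 2 (n : ℤ)) 2 := by
      rw [shf_self, shf_self, hz2]
    have := square_parity hbox hS₁Q hclosed hd hz
    rw [shf_shf, shf_shf] at this
    exact this
  have htel : ∀ N : ℕ, chi S₁ s(shf x 2 (N : ℤ), shf y 2 (N : ℤ)) =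
      chi S₁ s(x, y) + ((∑ n ∈ Finset.range N, chi S₁ (vedge x n)) +
        ∑ n ∈ Finset.range N, chi S₁ (vedge y n)) := by
    intro N
    induction N with
    | zero =>
      simp only [Nat.cast_zero, shf_zero, Finset.range_zero, Finset.sum_empty, add_zero]
    | succ N ih =>
      have h0 : chi S₁ s(shf x 2 (N:ℤ), shf y 2 (N:ℤ)) +
          (chi S₁ (vedge x N) + chi S₁ (vedge y N)) +
          chi S₁ s(shf x 2 ((N:ℤ) + 1), shf y 2 ((N:ℤ) + 1)) = 0 := by
        linear_combination hsq N
      have hstep := zmod2_shift h0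
      rw [show ((N + 1 : ℕ) : ℤ) = (N : ℤ) + 1 by push_cast; ring]
      rw [hstep, ih, Finset.sum_range_succ, Finset.sum_range_succ]
      ring
  have hend : chi S₁ s(shf x 2 (M : ℤ), shf y 2 (M : ℤ)) = 0 := by
    unfold chi
    rw [if_neg]
    intro hmem
    have hQ := hS₁Q hmem
    have hd : dist1 (shf x 2 (M : ℤ)) (shf y 2 (M : ℤ)) = 1 := by
      rw [dist1_shf_both]; exact hxy
    rcases bdry_endpoint_box hbox hd hQ with hb | hb
    · have := hb 2; rw [shf_self] at this; rw [abs_le] at this; omega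
    · have := hb 2; rw [shf_self] at this; rw [abs_le] at this
      omega
  have hfin := htel M
  rw [hend] at hfin
  have hpx : phi S₁ R x = ∑ n ∈ Finset.range M, chi S₁ (vedge x n) :=
    phi_eq_sum hbox hS₁Q x le_rfl
  have hpy : phi S₁ R y = ∑ n ∈ Finset.range M, chi S₁ (vedge y n) :=
    phi_eq_sum hbox hS₁Q y (le_of_eq hMy)
  rw [hpx, hpy]
  exact (zmod2_shift (by linear_combination hfin.symm)).symm

include hbox hS₁Q hclosed in
lemma phi_adj {x y : V3} (hxy : dist1 x y = 1) :
    phi S₁ R x + phi S₁ R y = chi S₁ s(x, y) := by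
  by_cases hz2 : x 2 = y 2
  · exact phi_horiz hbox hS₁Q hclosed hxy hz2
  · obtain ⟨j, hoff, hj⟩ := dist1_cases hxy
    have hj2 : j = 2 := by
      by_contra h
      exact hz2 (hoff 2 (fun hh => h hh.symm))
    subst hj2
    rcases hj with hj | hj
    · have hy : y = shf x 2 1 := by
        funext i
        by_cases hij : i = 2
        · rw [hij, shf_self]; omega
        · rw [shf_ne _ _ hij]; exact (hoff i hij).symm
      rw [hy]
      exact phi_vert hbox hS₁Q x
    · have hx : x = shf y 2 1 := by
        funext i
        by_cases hij : i = 2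
        · rw [hij, shf_self]; omega
        · rw [shf_ne _ _ hij]; exact hoff i hij
      rw [show s(x, y) = s(y, x) from Sym2.eq_swap, hx]
      rw [add_comm]
      exact phi_vert hbox hS₁Q y

include hbox hS₁Q hclosed in
lemma phi_const_UU {x y : V3} (h : Conn (UU Vs) x y) : phi S₁ R x = phi S₁ R y := by
  induction h with
  | refl => rfl
  | @tail c d h1 h2 ih =>
    obtain ⟨hc, hd, hcd⟩ := h2
    have hchi : chi S₁ s(c, d) = 0 := by
      unfold chi
      rw [if_neg]
      intro hmem
      rcases (dual_mem_bdryQ_iff hcd).mp (hS₁Q hmem) with ⟨ha, -⟩ | ⟨-, hb⟩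
      · exact hc ha
      · exact hd hb
    have := phi_adj hbox hS₁Q hclosed hcd
    rw [hchi] at this
    rw [ih, zmod2_cancel this]

include hbox hS₁Q hclosed in
lemma phi_const_V {x y : V3}
    (h : Relation.ReflTransGen (fun a b => a ∈ Vs ∧ b ∈ Vs ∧ dist1 a b = 1) x y) :
    phi S₁ R x = phi S₁ R y := by
  induction h with
  | refl => rfl
  | @tail c d h1 h2 ih =>
    obtain ⟨hc, hd, hcd⟩ := h2
    have hchi : chi S₁ s(c, d) = 0 := by
      unfold chi
      rw [if_neg]
      intro hmem
      rcases (dual_mem_bdryQ_iff hcd).mp (hS₁Q hmem) with ⟨-, hb⟩ | ⟨ha, -⟩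
      · exact hb (v_subset_UU Vs hd)
      · exact ha (v_subset_UU Vs hc)
    have := phi_adj hbox hS₁Q hclosed hcd
    rw [hchi] at this
    rw [ih, zmod2_cancel this]

end Parity

lemma setConn_bdryQ {Vs : Set V3} {R : ℤ} (hbox : ∀ v ∈ Vs, ∀ i, |v i| ≤ R)
    (hR : 0 ≤ R)
    (hVconn : ∀ x ∈ Vs, ∀ y ∈ Vs,
      Relation.ReflTransGen (fun a b => a ∈ Vs ∧ b ∈ Vs ∧ dist1 a b = 1) x y) :
    SetConn OneConn (bdryQ Vs) := by
  intro P hP P' hP'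
  set S₁ : Set (Set R3) := {h | h ∈ bdryQ Vs ∧
    Relation.ReflTransGen (fun a b => a ∈ bdryQ Vs ∧ b ∈ bdryQ Vs ∧ OneConn a b) P h}
    with hS₁def
  by_contra hcon
  have hP'S : P' ∉ S₁ := fun h => hcon h.2
  have hS₁Q : S₁ ⊆ bdryQ Vs := fun h hh => hh.1
  have hclosed : ∀ Pa ∈ S₁, ∀ Pb ∈ bdryQ Vs, OneConn Pa Pb → Pb ∈ S₁ := by
    rintro Pa ⟨haQ, haR⟩ Pb hbQ hcon1
    exact ⟨hbQ, haR.tail ⟨haQ, hbQ, hcon1⟩⟩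
  have hPS : P ∈ S₁ := ⟨hP, Relation.ReflTransGen.refl⟩
  obtain ⟨a, b, haU, hbU, hab, hPab⟩ := hP
  obtain ⟨c, d, hcU, hdU, hcd, hP'cd⟩ := hP'
  have haV : a ∈ Vs := inner_V haU hbU hab
  have hcV : c ∈ Vs := inner_V hcU hdU hcd
  have h1 : phi S₁ R a + phi S₁ R b = 1 := by
    have := phi_adj hbox hS₁Q hclosed hab
    rw [this]
    unfold chi
    rw [if_pos (hPab ▸ hPS)]
  have h2 : phi S₁ R c + phi S₁ R d = 0 := by
    have := phi_adj hbox hS₁Q hclosed hcd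
    rw [this]
    unfold chi
    rw [if_neg (fun hmem => hP'S (hP'cd ▸ hmem))]
  have h3 : phi S₁ R a = phi S₁ R c :=
    phi_const_V hbox hS₁Q hclosed (hVconn a haV c hcV)
  have h4 : phi S₁ R b = phi S₁ R d :=
    phi_const_UU hbox hS₁Q hclosed (conn_UU_of_not_mem hbox hR hbU hdU)
  rw [h3, h4, h2] at h1
  exact absurd h1 (by decide)

end SP

namespace SP

def TQ (Vs : Set V3) : Set R3 := ⋃₀ bdryQ Vs

section Topology

variable {Vs : Set V3} {R : ℤ}

lemma bdry_plq_form {P : Set R3} (h : P ∈ bdryQ Vs) :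
    ∃ a b : V3, a ∈ UU Vs ∧ b ∉ UU Vs ∧ dist1 a b = 1 ∧
      ∃ j v, s(a, b) = s(v, shf v j 1) ∧ P = mplq j (midp v j) := by
  obtain ⟨a, b, ha, hb, hab, hP⟩ := h
  obtain ⟨j, v, hjv, -⟩ := edge_normal hab
  exact ⟨a, b, ha, hb, hab, j, v, hjv, by rw [hP, hjv, dualPlq_unit]⟩

lemma lattice_not_in_TQ (Vs : Set V3) (w : V3) : toR w ∉ TQ Vs := by
  rintro ⟨P, hP, hw⟩
  obtain ⟨a, b, -, -, -, j, v, -, hPm⟩ := bdry_plq_form hP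
  rw [hPm] at hw
  exact lattice_not_mem_mplq w v j hw

lemma bdry_plq_cubes {P : Set R3} (h : P ∈ bdryQ Vs) :
    ∃ a b : V3, a ∈ UU Vs ∧ b ∉ UU Vs ∧ dist1 a b = 1 ∧ P ⊆ cube a ∧ P ⊆ cube b := by
  obtain ⟨a, b, ha, hb, hab, j, v, hjv, hPm⟩ := bdry_plq_form h
  have hsub := mplq_subset_cubes v j
  rw [← hPm] at hsub
  rw [Sym2.eq_iff] at hjv
  rcases hjv with ⟨h1, h2⟩ | ⟨h1, h2⟩
  · exact ⟨a, b, ha, hb, hab, fun z hz => by rw [h1]; exact (hsub hz).1,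
      fun z hz => by rw [h2]; exact (hsub hz).2⟩
  · exact ⟨a, b, ha, hb, hab, fun z hz => by rw [h1]; exact (hsub hz).2,
      fun z hz => by rw [h2]; exact (hsub hz).1⟩

lemma TQ_of_mixed {z : R3} {u v : V3} (hu : z ∈ cube u) (hv : z ∈ cube v)
    (huU : u ∈ UU Vs) (hvU : v ∉ UU Vs) : z ∈ TQ Vs := by
  obtain ⟨P, hPQ, hzP⟩ := face_walk (dist1 u v).toNat u v (by omega) hu hv huU hvU
  exact ⟨P, hPQ, hzP⟩

/-- the union of open "cells": points all of whose cubes have centres in `S` -/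
def Oset (Vs : Set V3) (S : Set V3) : Set R3 :=
  {z | z ∉ TQ Vs ∧ ∀ v : V3, z ∈ cube v → v ∈ S}

lemma Oset_open (S : Set V3)
    (hSmix : ∀ a b : V3, a ∈ UU Vs → b ∉ UU Vs → dist1 a b = 1 → ¬(a ∈ S ∧ b ∈ S)) :
    IsOpen (Oset Vs S) := by
  rw [Metric.isOpen_iff]
  rintro z ⟨hzT, hzc⟩
  -- the finitely many nearby lattice points
  have hGfin : {v : V3 | ∀ i, |z i - (v i : ℝ)| ≤ 3/2}.Finite := by
    have h : (Set.univ.pi fun i : Fin 3 => Set.Icc (⌈z i - 3/2⌉) (⌊z i + 3/2⌋)).Finite :=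
      Set.Finite.pi fun _ => Set.finite_Icc _ _
    refine h.subset ?_
    intro v hv i _
    have := hv i
    rw [abs_le] at this
    constructor
    · exact Int.ceil_le.mpr (by linarith [this.2])
    · exact Int.le_floor.mpr (by linarith [this.1])
  have hTfin : {v : V3 | (∀ i, |z i - (v i : ℝ)| ≤ 3/2) ∧ z ∉ cube v}.Finite :=
    hGfin.subset fun v hv => hv.1
  set εf : V3 → ℝ := fun v =>
    if h : ∃ i, 1/2 < |z i - (v i : ℝ)| then |z h.choose - (v h.choose : ℝ)| - 1/2 else 1
    with hεf
  have hεf_pos : ∀ v : V3, z ∉ cube v → 0 < εf v ∧ ∃ i, 1/2 + εf v ≤ |z i - (v i : ℝ)| := by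
    intro v hv
    have hex : ∃ i, 1/2 < |z i - (v i : ℝ)| := by
      by_contra hc
      push_neg at hc
      exact hv fun i => hc i
    rw [hεf]
    simp only [dif_pos hex]
    exact ⟨by linarith [hex.choose_spec], ⟨hex.choose, by linarith [hex.choose_spec]⟩⟩
  set T := hTfin.toFinset with hT
  set ε : ℝ := if hTne : T.Nonempty then min (1/4) (T.inf' hTne εf) else 1/4 with hε
  have hεpos : 0 < ε := by
    rw [hε]
    split_ifs with hTne
    · refine lt_min (by norm_num) ?_
      rw [Finset.lt_inf'_iff]
      intro v hv
      rw [hT, Set.Finite.mem_toFinset] at hv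
      exact (hεf_pos v hv.2).1
    · norm_num
  have hεsmall : ε ≤ 1/4 := by
    rw [hε]; split_ifs; exacts [min_le_left _ _, le_rfl]
  refine ⟨ε, hεpos, ?_⟩
  intro w hw
  rw [Metric.mem_ball] at hw
  have hcoord : ∀ i, |z i - w i| < ε := by
    intro i
    calc |z i - w i| = dist (w i) (z i) := by rw [Real.dist_eq, abs_sub_comm]
    _ ≤ dist w z := dist_le_pi_dist w z i
    _ < ε := hw
  have hwcubes : ∀ v : V3, w ∈ cube v → z ∈ cube v := by
    intro v hwv
    by_contra hzv
    have hvT : v ∈ T := by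
      rw [hT, Set.Finite.mem_toFinset]
      refine ⟨fun i => ?_, hzv⟩
      calc |z i - (v i : ℝ)| ≤ |z i - w i| + |w i - (v i : ℝ)| :=
            abs_sub_le (z i) (w i) ((v i : ℝ))
      _ ≤ ε + 1/2 := add_le_add (le_of_lt (hcoord i)) (hwv i)
      _ ≤ 3/2 := by linarith
    have hεle : ε ≤ εf v := by
      rw [hε]
      rw [dif_pos ⟨v, hvT⟩]
      exact le_trans (min_le_right _ _) (Finset.inf'_le εf hvT)
    obtain ⟨-, i, hi⟩ := hεf_pos v hzv
    have h1 := hwv i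
    have h2 : |z i - (v i : ℝ)| ≤ |z i - w i| + |w i - (v i : ℝ)| := abs_sub_le _ _ _
    have := hcoord i
    linarith
  have hwT : w ∉ TQ Vs := by
    rintro ⟨P, hPQ, hwP⟩
    obtain ⟨a, b, haU, hbU, hab, hsa, hsb⟩ := bdry_plq_cubes hPQ
    have haS : a ∈ S := hzc a (hwcubes a (hsa hwP))
    have hbS : b ∈ S := hzc b (hwcubes b (hsb hwP))
    exact hSmix a b haU hbU hab ⟨haS, hbS⟩
  exact ⟨hwT, fun v hv => hzc v (hwcubes v hv)⟩

lemma Oset_open_U : IsOpen (Oset Vs (UU Vs)) :=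
  Oset_open (UU Vs) fun _ b _ hb _ h => hb h.2

lemma Oset_open_Uc : IsOpen (Oset Vs (UU Vs)ᶜ) :=
  Oset_open (UU Vs)ᶜ fun a _ ha _ _ h => h.1 ha

lemma Oset_cover {z : R3} (hz : z ∉ TQ Vs) :
    z ∈ Oset Vs (UU Vs) ∪ Oset Vs (UU Vs)ᶜ := by
  by_cases hall : ∀ v : V3, z ∈ cube v → v ∈ UU Vs
  · exact Or.inl ⟨hz, hall⟩
  · push_neg at hall
    obtain ⟨v0, hv0c, hv0U⟩ := hall
    refine Or.inr ⟨hz, fun v hv hvU => ?_⟩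
    exact hz (TQ_of_mixed hv hv0c hvU hv0U)

lemma Oset_disjoint : Disjoint (Oset Vs (UU Vs)) (Oset Vs (UU Vs)ᶜ) := by
  rw [Set.disjoint_left]
  rintro z ⟨-, h1⟩ ⟨-, h2⟩
  obtain ⟨v, hv⟩ := exists_cube z
  exact h2 v hv (h1 v hv)

lemma inside_main (hbox : ∀ v ∈ Vs, ∀ i, |v i| ≤ R) (hR : 0 ≤ R) {x : V3}
    (hx : x ∈ UU Vs) : toR x ∈ insR (TQ Vs) := by
  refine ⟨lattice_not_in_TQ Vs x, ?_⟩
  have hxT : toR x ∈ (TQ Vs)ᶜ := lattice_not_in_TQ Vs x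
  have hsub : connectedComponentIn (TQ Vs)ᶜ (toR x) ⊆ Oset Vs (UU Vs) := by
    apply IsPreconnected.subset_left_of_subset_union Oset_open_U Oset_open_Uc Oset_disjoint
    · exact fun z hz => Oset_cover (connectedComponentIn_subset _ _ hz)
    · refine ⟨toR x, mem_connectedComponentIn hxT, ?_⟩
      refine ⟨hxT, fun v hv => ?_⟩
      rw [cube_lattice_eq hv]
      exact hx
    · exact isPreconnected_connectedComponentIn
  refine Bornology.IsBounded.subset (Metric.isBounded_closedBall
    (x := (0 : R3)) (r := (R : ℝ) + 1)) ?_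
  refine hsub.trans ?_
  rintro z ⟨-, hzc⟩
  obtain ⟨v, hv⟩ := exists_cube z
  have hvU : v ∈ UU Vs := hzc v hv
  have hvbox := UU_subset_box hbox hvU
  rw [Metric.mem_closedBall, dist_zero_right]
  rw [pi_norm_le_iff_of_nonneg (by positivity)]
  intro i
  have h1 := hv i
  have h2 : |(v i : ℝ)| ≤ (R : ℝ) := by exact_mod_cast hvbox i
  rw [Real.norm_eq_abs]
  calc |z i| = |(z i - (v i : ℝ)) + (v i : ℝ)| := by ring_nf
  _ ≤ |z i - (v i : ℝ)| + |(v i : ℝ)| := abs_add_le _ _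
  _ ≤ (R : ℝ) + 1 := by linarith

lemma seg_avoid {u v : V3} (hu : u ∉ Vs) (hv : v ∉ Vs) (huv : dist1 u v = 1) :
    segment ℝ (toR u) (toR v) ⊆ (TQ Vs)ᶜ := by
  intro z hz
  rintro ⟨P, hPQ, hzP⟩
  obtain ⟨a, b, haU, hbU, hab, j, p, hjp, hPm⟩ := bdry_plq_form hPQ
  rw [hPm] at hzP
  obtain ⟨k, w, hkw, hwor⟩ := edge_normal huv
  have hseg : z ∈ segment ℝ (toR w) (toR (shf w k 1)) := by
    rcases hwor with rfl | rfl
    · have hv' : shf w k 1 = v := by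
        have h := hkw
        rw [Sym2.eq_iff] at h
        rcases h with ⟨-, h2⟩ | ⟨h1, h2⟩
        · exact h2.symm
        · exact (h2.trans h1).symm
      rw [hv']
      exact hz
    · have hv' : shf w k 1 = u := by
        have h := hkw
        rw [Sym2.eq_iff] at h
        rcases h with ⟨h1, -⟩ | ⟨h1, -⟩
        · exfalso
          rw [h1] at huv
          have hzero : dist1 w w = 0 := by
            unfold dist1
            simp
          omega
        · exact h1.symm
      rw [hv', segment_symm]
      exact hz
  obtain ⟨rfl, rfl⟩ := segment_mplq hseg hzP
  have haV : a ∈ Vs := inner_V haU hbU hab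
  have hab2 : s(a, b) = s(u, v) := hjp.trans hkw.symm
  rw [Sym2.eq_iff] at hab2
  rcases hab2 with ⟨rfl, -⟩ | ⟨rfl, -⟩
  · exact hu haV
  · exact hv haV

end Topology

end SP

namespace SP

lemma conn_component_path {Vs : Set V3} {w z : V3} (h : Conn Vs w z) :
    toR z ∈ connectedComponentIn (TQ Vs)ᶜ (toR w) := by
  induction h with
  | refl => exact mem_connectedComponentIn (lattice_not_in_TQ Vs w)
  | @tail c d h1 h2 ih =>
    have hseg := seg_avoid h2.1 h2.2.1 h2.2.2
    have hpre : IsPreconnected (segment ℝ (toR c) (toR d)) :=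
      (convex_segment _ _).isPreconnected
    have heq := connectedComponentIn_eq ih
    have hsub : segment ℝ (toR c) (toR d) ⊆ connectedComponentIn (TQ Vs)ᶜ (toR c) :=
      hpre.subset_connectedComponentIn (left_mem_segment ℝ _ _) hseg
    rw [heq]
    exact hsub (right_mem_segment ℝ _ _)

lemma isLatticeEdge_dist1 {a b : V3} (h : IsLatticeEdge s(a, b)) : dist1 a b = 1 := by
  obtain ⟨x, y, hxy, hd⟩ := h
  rw [Sym2.eq_iff] at hxy
  rcases hxy with ⟨rfl, rfl⟩ | ⟨rfl, rfl⟩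
  · exact hd
  · rw [dist1_comm]; exact hd

end SP

/-- existence of a splitting set of plaquettes around a finite
connected subgraph of the lattice. -/
theorem statement5 (V : Set V3) (E : Set EdgeP) (hfin : V.Finite) (hne : V.Nonempty)
    (hE : ∀ e ∈ E, IsLatticeEdge e ∧ ∀ x ∈ e, x ∈ V)
    (hconn : ∀ x ∈ V, ∀ y ∈ V, Relation.ReflTransGen (fun a b => s(a, b) ∈ E) x y) :
    ∃ Q : Set (Set R3), IsSplitting Q ∧
      (∀ x ∈ V, toR x ∈ insR (⋃₀ Q)) ∧
      (∀ P ∈ Q, ∃ x y : V3, dist1 x y = 1 ∧ x ∈ V ∧ y ∉ V ∧ P = dualPlq s(x, y)) ∧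
      (∀ W : Set V3,
        (∀ a ∈ W, ∀ b ∈ W,
          Relation.ReflTransGen (fun u v => u ∈ W ∧ v ∈ W ∧ dist1 u v = 1) a b) →
        V ∩ W = ∅ →
        (∃ γ : ℕ → V3, γ 0 ∈ W ∧ (∀ n, dist1 (γ n) (γ (n + 1)) = 1) ∧
          Function.Injective γ ∧ ∀ n, γ n ∉ V) →
        ∀ w ∈ W, toR w ∈ outR (⋃₀ Q)) := by
  classical
  obtain ⟨R, hR0, hbox⟩ : ∃ R : ℤ, 0 ≤ R ∧ ∀ x ∈ V, ∀ i, |x i| ≤ R := by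
    have him : ((fun x : V3 => |x 0| ⊔ |x 1| ⊔ |x 2|) '' V).Finite := hfin.image _
    obtain ⟨R0, hR0⟩ := him.bddAbove
    refine ⟨max R0 0, le_max_right _ _, fun x hx i => ?_⟩
    have hmem : |x 0| ⊔ |x 1| ⊔ |x 2| ≤ R0 := hR0 (Set.mem_image_of_mem _ hx)
    rw [sup_le_iff, sup_le_iff] at hmem
    obtain ⟨⟨h0, h1⟩, h2⟩ := hmem
    fin_cases i
    · exact le_trans h0 (le_max_left _ _)
    · exact le_trans h1 (le_max_left _ _)
    · exact le_trans h2 (le_max_left _ _)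
  have hVconn : ∀ x ∈ V, ∀ y ∈ V,
      Relation.ReflTransGen (fun a b => a ∈ V ∧ b ∈ V ∧ dist1 a b = 1) x y := by
    intro x hx y hy
    refine Relation.ReflTransGen.mono ?_ _ _ (hconn x hx y hy)
    intro a b hab
    obtain ⟨hedge, hmem⟩ := hE _ hab
    exact ⟨hmem a (Sym2.mem_mk_left a b), hmem b (Sym2.mem_mk_right a b),
      SP.isLatticeEdge_dist1 hedge⟩
  refine ⟨SP.bdryQ V, ⟨?_, ?_, ?_, ?_⟩, ?_, ?_, ?_⟩
  · -- finite
    have hsub : SP.bdryQ V ⊆ (fun p : V3 × V3 => dualPlq s(p.1, p.2)) ''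
        ((SP.boxZ R) ×ˢ (SP.boxZ (R + 1))) := by
      rintro P ⟨a, b, ha, hb, hab, rfl⟩
      refine ⟨(a, b), ⟨SP.UU_subset_box hbox ha, fun i => ?_⟩, rfl⟩
      have h1 := abs_coord_le_of_dist1 a b hab i
      have h2 := SP.UU_subset_box hbox ha i
      have h3 : |b i| ≤ |b i - a i| + |a i| := by
        calc |b i| = |(b i - a i) + a i| := by ring_nf
        _ ≤ |b i - a i| + |a i| := abs_add_le _ _
      rw [abs_sub_comm] at h3
      show |b i| ≤ R + 1
      omega
    exact (((SP.boxZ_finite R).prod (SP.boxZ_finite (R + 1))).image _).subset hsub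
  · -- all plaquettes
    rintro P ⟨a, b, ha, hb, hab, rfl⟩
    exact ⟨s(a, b), ⟨a, b, rfl, hab⟩, rfl⟩
  · -- 1-connectedness
    exact SP.setConn_bdryQ hbox hR0 hVconn
  · -- nonempty inside
    obtain ⟨x0, hx0⟩ := hne
    exact ⟨toR x0, SP.inside_main hbox hR0 (SP.v_subset_UU V hx0)⟩
  · -- V inside
    intro x hx
    exact SP.inside_main hbox hR0 (SP.v_subset_UU V hx)
  · -- boundary edges
    rintro P ⟨a, b, ha, hb, hab, rfl⟩
    exact ⟨a, b, hab, SP.inner_V ha hb hab, fun hbV => hb (SP.v_subset_UU V hbV), rfl⟩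
  · -- outer vertex sets
    rintro W hWconn hWV ⟨γ, hγ0, hγadj, hγinj, hγV⟩ w hw
    have hnotV : ∀ a ∈ W, a ∉ V := by
      intro a haW haV
      have : a ∈ V ∩ W := ⟨haV, haW⟩
      rw [hWV] at this
      exact this
    have h1 : SP.Conn V w (γ 0) := by
      refine Relation.ReflTransGen.mono ?_ _ _ (hWconn w hw (γ 0) hγ0)
      intro a b hab
      exact ⟨hnotV a hab.1, hnotV b hab.2.1, hab.2.2⟩
    have h2 : ∀ n, SP.Conn V w (γ n) := by
      intro n
      induction n with
      | zero => exact h1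
      | succ n ih => exact ih.tail ⟨hγV n, hγV (n + 1), hγadj n⟩
    refine ⟨SP.lattice_not_in_TQ V w, ?_⟩
    intro hbdd
    rw [Metric.isBounded_iff_subset_closedBall (0 : R3)] at hbdd
    obtain ⟨r, hr⟩ := hbdd
    have hmem : ∀ n, γ n ∈ {x : V3 | toR x ∈ Metric.closedBall (0 : R3) r} := by
      intro n
      exact hr (SP.conn_component_path (h2 n))
    have hBsub : {x : V3 | toR x ∈ Metric.closedBall (0 : R3) r} ⊆ SP.boxZ ⌈r⌉ := by
      intro x hx i
      have h1 : |(x i : ℝ)| ≤ r := by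
        have h2 : ‖toR x‖ ≤ r := by
          rw [← dist_zero_right]
          exact hx
        exact le_trans (norm_le_pi_norm (toR x) i) h2
      have h2 : |(x i : ℝ)| ≤ (⌈r⌉ : ℝ) := le_trans h1 (Int.le_ceil r)
      exact_mod_cast (by push_cast; exact h2 : ((|x i| : ℤ) : ℝ) ≤ ((⌈r⌉ : ℤ) : ℝ))
    exact Set.infinite_of_injective_forall_mem hγinj hmem
      ((SP.boxZ_finite ⌈r⌉).subset hBsub)

end
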